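/- arXiv:1502.05334 — 2 statements merged into one kernel-verified Lean document; each statement's English description precedes it below -/
import Mathlib

section
/- Every D3-reducible graph is planar. -/
/-- A finite graph on a subset of `ℕ`, allowing vertex-set changes under reductions. -/
structure FinGraph where
  verts : Finset ℕ
  Adj : ℕ → ℕ → Prop
  symm : ∀ u v, Adj u v → Adj v u
  loopless : ∀ u, ¬ Adj u u
  support : ∀ u v, Adj u v → u ∈ verts ∧ v ∈ verts

namespace FinGraph

def neighborSet (G : FinGraph) (v : ℕ) : Set ℕ := {u | G.Adj v u}

/-- The degree of a vertex. -/
noncomputable def degree (G : FinGraph) (v : ℕ) : ℕ := (G.neighborSet v).ncard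

/-- Reachability by a walk staying inside the set `S`. -/
def ReachableWithin (G : FinGraph) (S : Set ℕ) (u v : ℕ) : Prop :=
  Relation.ReflTransGen (fun a b => G.Adj a b ∧ a ∈ S ∧ b ∈ S) u v

/-- The subgraph induced on `S` is connected. -/
def ConnectedOn (G : FinGraph) (S : Set ℕ) : Prop :=
  ∀ u ∈ S, ∀ v ∈ S, G.ReachableWithin S u v

def Connected (G : FinGraph) : Prop := G.ConnectedOn ↑G.verts

/-- 3-vertex-connectivity: more than three vertices, and connected after deleting
any two vertices. -/
def ThreeConnected (G : FinGraph) : Prop :=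
  3 < G.verts.card ∧ ∀ x y : ℕ, G.ConnectedOn (↑G.verts \ {x, y})

/-- Graph isomorphism. -/
def Iso (G H : FinGraph) : Prop :=
  ∃ f : ℕ → ℕ, Set.BijOn f ↑G.verts ↑H.verts ∧
    ∀ u ∈ G.verts, ∀ v ∈ G.verts, (G.Adj u v ↔ H.Adj (f u) (f v))

/-- The configuration for a D3a reduction: a triangle `p q r` of degree-three
vertices whose outside neighbors `p' q' r'` are three distinct vertices. -/
def D3aConfig (G : FinGraph) (p q r p' q' r' : ℕ) : Prop :=
  G.degree p = 3 ∧ G.degree q = 3 ∧ G.degree r = 3 ∧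
  G.Adj p q ∧ G.Adj q r ∧ G.Adj p r ∧
  G.Adj p p' ∧ G.Adj q q' ∧ G.Adj r r' ∧
  p' ∉ ({p, q, r} : Set ℕ) ∧ q' ∉ ({p, q, r} : Set ℕ) ∧ r' ∉ ({p, q, r} : Set ℕ) ∧
  p' ≠ q' ∧ p' ≠ r' ∧ q' ≠ r'

/-- A D3a reduction from `G` to `H`: collapse such a triangle to a new vertex `t`. -/
def D3a (G H : FinGraph) : Prop :=
  ∃ p q r p' q' r' t, G.D3aConfig p q r p' q' r' ∧ t ∉ G.verts ∧
    H.verts = (G.verts \ {p, q, r}) ∪ {t} ∧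
    ∀ a b, H.Adj a b ↔
      (G.Adj a b ∧ a ∉ ({p, q, r} : Set ℕ) ∧ b ∉ ({p, q, r} : Set ℕ)) ∨
      (a = t ∧ b ∈ ({p', q', r'} : Set ℕ)) ∨
      (b = t ∧ a ∈ ({p', q', r'} : Set ℕ))

/-- The configuration for a D3b reduction: an induced path `p q r` of degree-three
vertices, all adjacent to a common apex `s`. -/
def D3bConfig (G : FinGraph) (p q r s : ℕ) : Prop :=
  G.degree p = 3 ∧ G.degree q = 3 ∧ G.degree r = 3 ∧
  G.Adj p q ∧ G.Adj q r ∧ ¬ G.Adj p r ∧ p ≠ r ∧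
  G.Adj s p ∧ G.Adj s q ∧ G.Adj s r

/-- A D3b reduction from `G` to `H`: delete the middle vertex `q` and add edge `pr`. -/
def D3b (G H : FinGraph) : Prop :=
  ∃ p q r s, G.D3bConfig p q r s ∧
    H.verts = G.verts \ {q} ∧
    ∀ a b, H.Adj a b ↔
      (G.Adj a b ∧ a ≠ q ∧ b ≠ q) ∨ (a = p ∧ b = r) ∨ (a = r ∧ b = p)

/-- A single D3 reduction. -/
def D3Step (G H : FinGraph) : Prop := G.D3a H ∨ G.D3b H

/-- `G` is a complete graph on four vertices. -/
def IsK4 (G : FinGraph) : Prop :=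
  G.verts.card = 4 ∧ ∀ u ∈ G.verts, ∀ v ∈ G.verts, u ≠ v → G.Adj u v

/-- A graph is D3-reducible if some sequence of D3 reductions takes it to `K₄`. -/
def D3Reducible (G : FinGraph) : Prop :=
  ∃ H, Relation.ReflTransGen D3Step G H ∧ H.IsK4

/-- No D3 reduction applies. -/
def Irreducible (G : FinGraph) : Prop := ¬ ∃ H, G.D3Step H

/-- `H` is a minor of `G`, witnessed by connected, disjoint branch sets. -/
def HasMinor (G H : FinGraph) : Prop :=
  ∃ B : ℕ → Finset ℕ,
    (∀ v ∈ H.verts, (B v).Nonempty ∧ ↑(B v) ⊆ (↑G.verts : Set ℕ) ∧ G.ConnectedOn ↑(B v)) ∧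
    (∀ u ∈ H.verts, ∀ v ∈ H.verts, u ≠ v → Disjoint (B u) (B v)) ∧
    (∀ u v, H.Adj u v → ∃ a ∈ B u, ∃ b ∈ B v, G.Adj a b)

def K5Graph : FinGraph where
  verts := Finset.range 5
  Adj a b := a ≠ b ∧ a < 5 ∧ b < 5
  symm := fun _ _ h => ⟨Ne.symm h.1, h.2.2, h.2.1⟩
  loopless := fun _ h => h.1 rfl
  support := fun _ _ h => ⟨Finset.mem_range.2 h.2.1, Finset.mem_range.2 h.2.2⟩

def K33Graph : FinGraph where
  verts := Finset.range 6
  Adj a b := (a < 3 ∧ 3 ≤ b ∧ b < 6) ∨ (b < 3 ∧ 3 ≤ a ∧ a < 6)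
  symm := fun _ _ h => h.elim Or.inr Or.inl
  loopless := by intro u h; rcases h with ⟨h1, h2, _⟩ | ⟨h1, h2, _⟩ <;> omega
  support := by
    intro u v h
    constructor <;> rw [Finset.mem_range] <;>
      rcases h with ⟨h1, h2, h3⟩ | ⟨h1, h2, h3⟩ <;> omega

/-- Planarity, via Wagner's characterization: no `K₅` and no `K₃,₃` minor. -/
def Planar (G : FinGraph) : Prop := ¬ G.HasMinor K5Graph ∧ ¬ G.HasMinor K33Graph

/-- `T` is a tree: nonempty, connected, and every edge is a bridge (acyclicity). -/
def IsTreeGraph (T : FinGraph) : Prop :=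
  T.verts.Nonempty ∧ T.Connected ∧
  ∀ u v, T.Adj u v → ¬ Relation.ReflTransGen
    (fun a b => T.Adj a b ∧ ¬(a = u ∧ b = v) ∧ ¬(a = v ∧ b = u)) u v

def IsLeaf (T : FinGraph) (v : ℕ) : Prop := T.degree v = 1

/-- The edges of `G` not in the spanning tree `T` (the candidate cycle edges). -/
def cycleAdj (G T : FinGraph) (a b : ℕ) : Prop := G.Adj a b ∧ ¬ T.Adj a b

/-- `G` is a Halin graph with underlying tree `T`: `T` is a spanning tree with at
least four vertices and no degree-two vertex, the non-tree edges form a single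
cycle passing exactly through the leaves of `T`, and `G` is planar (which forces
the cycle to traverse the leaves in the cyclic order of a planar embedding of `T`). -/
def IsHalinVia (G T : FinGraph) : Prop :=
  IsTreeGraph T ∧ T.verts = G.verts ∧ 4 ≤ T.verts.card ∧
  (∀ v ∈ T.verts, T.degree v ≠ 2) ∧
  (∀ a b, T.Adj a b → G.Adj a b) ∧
  (∀ a b, cycleAdj G T a b → T.IsLeaf a ∧ T.IsLeaf b) ∧
  (∀ v ∈ G.verts, T.IsLeaf v → {u | cycleAdj G T v u}.ncard = 2) ∧
  (∀ u v, u ∈ G.verts → v ∈ G.verts → T.IsLeaf u → T.IsLeaf v →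
    Relation.ReflTransGen (cycleAdj G T) u v) ∧
  G.Planar

def IsHalin (G : FinGraph) : Prop := ∃ T, IsHalinVia G T

/-- Treewidth at most `k`, via tree decompositions. -/
def TreewidthLE (G : FinGraph) (k : ℕ) : Prop :=
  ∃ (ι : Type) (T : SimpleGraph ι) (bag : ι → Finset ℕ),
    T.IsTree ∧
    (∀ v ∈ G.verts, ∃ i, v ∈ bag i) ∧
    (∀ u v, G.Adj u v → ∃ i, u ∈ bag i ∧ v ∈ bag i) ∧
    (∀ (v : ℕ) (i j : ι) (p : T.Walk i j), p.IsPath → v ∈ bag i → v ∈ bag j →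
      ∀ m ∈ p.support, v ∈ bag m) ∧
    (∀ i, (bag i).card ≤ k + 1)

/-- A face of a 3-connected planar graph, by Tutte's characterization:
an induced cycle whose complement induces a connected subgraph. -/
def IsFaceCycle (G : FinGraph) (C : Finset ℕ) : Prop :=
  ↑C ⊆ (↑G.verts : Set ℕ) ∧ 3 ≤ C.card ∧
  (∀ v ∈ C, {u | u ∈ C ∧ G.Adj v u}.ncard = 2) ∧
  G.ConnectedOn ↑C ∧
  G.ConnectedOn (↑G.verts \ ↑C)

/-- `D` is the planar dual of the (3-connected planar) graph `G`: its vertices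
correspond bijectively to the faces of `G`, with adjacency for faces sharing an edge. -/
def IsDualOf (D G : FinGraph) : Prop :=
  ∃ F : ℕ → Finset ℕ,
    Set.InjOn F ↑D.verts ∧
    (∀ d ∈ D.verts, IsFaceCycle G (F d)) ∧
    (∀ C, IsFaceCycle G C → ∃ d ∈ D.verts, F d = C) ∧
    (∀ d e, D.Adj d e ↔ d ∈ D.verts ∧ e ∈ D.verts ∧ d ≠ e ∧
      ∃ u v, G.Adj u v ∧ u ∈ F d ∧ v ∈ F d ∧ u ∈ F e ∧ v ∈ F e)

/-- A wheel graph: a hub adjacent to all other vertices, which form a cycle. -/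
def IsWheel (G : FinGraph) : Prop :=
  4 ≤ G.verts.card ∧ ∃ h ∈ G.verts,
    (∀ v ∈ G.verts, v ≠ h → G.Adj h v ∧ G.degree v = 3) ∧
    G.ConnectedOn (↑G.verts \ {h})

/-- Glue the wheel `W` onto `G` along a shared triangular face `{a,b,c}`,
identifying the two faces vertexwise, producing `H`. -/
def GlueStep (G W H : FinGraph) : Prop :=
  ∃ a b c : ℕ, a ≠ b ∧ a ≠ c ∧ b ≠ c ∧
    IsFaceCycle G {a, b, c} ∧ IsFaceCycle W {a, b, c} ∧
    (↑G.verts ∩ ↑W.verts : Set ℕ) = {a, b, c} ∧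
    H.verts = G.verts ∪ W.verts ∧
    (∀ u v, H.Adj u v ↔ G.Adj u v ∨ W.Adj u v)

/-- Graphs constructed by gluing wheels together along triangular faces.
(Each gluing attaches one further wheel along a current triangular face; a glued
face stops being a face, so each face is used at most once, and no graph is
glued to itself.) -/
inductive GluedWheels : FinGraph → Prop
  | base (G : FinGraph) : IsWheel G → GluedWheels G
  | glue (G W H : FinGraph) : GluedWheels G → IsWheel W → GlueStep G W H → GluedWheels H

/-- Delete vertices in `S` from `G`. -/
def removeVerts (G : FinGraph) (S : Finset ℕ) : FinGraph where
  verts := G.verts \ S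
  Adj a b := G.Adj a b ∧ a ∉ S ∧ b ∉ S
  symm := fun u v h => ⟨G.symm u v h.1, h.2.2, h.2.1⟩
  loopless := fun u h => G.loopless u h.1
  support := fun u v h =>
    ⟨Finset.mem_sdiff.2 ⟨(G.support u v h.1).1, h.2.1⟩,
     Finset.mem_sdiff.2 ⟨(G.support u v h.1).2, h.2.2⟩⟩

/-- Delete the edge `uv` from `G`. -/
def deleteEdge (G : FinGraph) (u v : ℕ) : FinGraph where
  verts := G.verts
  Adj a b := G.Adj a b ∧ ¬((a = u ∧ b = v) ∨ (a = v ∧ b = u))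
  symm := fun a b h => ⟨G.symm a b h.1, by tauto⟩
  loopless := fun a h => G.loopless a h.1
  support := fun a b h => G.support a b h.1

end FinGraph

namespace FinGraph

section Helpers

lemma mapReach (G H : FinGraph) (B B' : Set ℕ) (f : ℕ → ℕ)
    (hmem : ∀ a ∈ B, f a ∈ B')
    (hadj : ∀ a b, G.Adj a b → a ∈ B → b ∈ B → f a = f b ∨ H.Adj (f a) (f b)) :
    ∀ u v, G.ReachableWithin B u v → H.ReachableWithin B' (f u) (f v) := by
  intro u v h
  induction h with
  | refl => exact Relation.ReflTransGen.refl
  | tail hwb hstep ih =>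
    obtain ⟨hA, hw, hb⟩ := hstep
    rcases hadj _ _ hA hw hb with he | he
    · rwa [he] at ih
    · exact ih.tail ⟨he, hmem _ hw, hmem _ hb⟩

lemma connMap (G H : FinGraph) (B B' : Set ℕ) (f : ℕ → ℕ)
    (hc : G.ConnectedOn B)
    (hmem : ∀ a ∈ B, f a ∈ B')
    (hadj : ∀ a b, G.Adj a b → a ∈ B → b ∈ B → f a = f b ∨ H.Adj (f a) (f b))
    (hsurj : ∀ x ∈ B', ∃ a ∈ B, f a = x) :
    H.ConnectedOn B' := by
  intro u hu v hv
  obtain ⟨a, ha, rfl⟩ := hsurj u hu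
  obtain ⟨b, hb, rfl⟩ := hsurj v hv
  exact mapReach G H B B' f hmem hadj a b (hc a ha b hb)

lemma nbrFinite (G : FinGraph) (v : ℕ) : (G.neighborSet v).Finite :=
  (G.verts.finite_toSet).subset (fun y hy => (G.support v y hy).2)

lemma degThreeNbrs (G : FinGraph) (v a b c : ℕ) (hd : G.degree v = 3)
    (hab : a ≠ b) (hac : a ≠ c) (hbc : b ≠ c)
    (ha : G.Adj v a) (hb : G.Adj v b) (hc : G.Adj v c) :
    ∀ x, G.Adj v x → x = a ∨ x = b ∨ x = c := by
  intro x hx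
  have hsub : ({a, b, c} : Set ℕ) ⊆ G.neighborSet v := by
    intro y hy
    rcases hy with rfl | rfl | rfl <;> assumption
  have hcard : ({a, b, c} : Set ℕ).ncard = 3 := by
    rw [Set.ncard_insert_of_notMem (by simp [hab, hac]),
      Set.ncard_insert_of_notMem (by simp [hbc]), Set.ncard_singleton]
  have heq : ({a, b, c} : Set ℕ) = G.neighborSet v :=
    Set.eq_of_subset_of_ncard_le hsub (by rw [hcard]; exact le_of_eq hd) (nbrFinite G v)
  have : x ∈ ({a, b, c} : Set ℕ) := heq ▸ hx
  simpa using this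

lemma thirdNbr (G : FinGraph) (v a b : ℕ) (hd : G.degree v = 3) (hab : a ≠ b)
    (ha : G.Adj v a) (hb : G.Adj v b) :
    ∃ w, G.Adj v w ∧ w ≠ a ∧ w ≠ b ∧ ∀ x, G.Adj v x → x = a ∨ x = b ∨ x = w := by
  have hsub : ({a, b} : Set ℕ) ⊆ G.neighborSet v := by
    intro y hy; rcases hy with rfl | rfl <;> assumption
  have hcard : ({a, b} : Set ℕ).ncard = 2 := by
    rw [Set.ncard_insert_of_notMem (by simp [hab]), Set.ncard_singleton]
  have hne : ¬ (G.neighborSet v ⊆ ({a, b} : Set ℕ)) := by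
    intro hsub2
    have := Set.ncard_le_ncard hsub2 ((Set.finite_singleton b).insert a)
    have hd' : (G.neighborSet v).ncard = 3 := hd
    rw [hd', hcard] at this
    omega
  obtain ⟨w, hw1, hw2⟩ := Set.not_subset.mp hne
  have hwa : w ≠ a := by intro h; exact hw2 (by simp [h])
  have hwb : w ≠ b := by intro h; exact hw2 (by simp [h])
  exact ⟨w, hw1, hwa, hwb, degThreeNbrs G v a b w hd hab hwa.symm hwb.symm ha hb hw1⟩

lemma firstNbr (G : FinGraph) (B : Set ℕ) (hc : G.ConnectedOn B)
    (u x : ℕ) (hu : u ∈ B) (hx : x ∈ B) (hne : u ≠ x) : ∃ y ∈ B, G.Adj u y := by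
  have h := hc u hu x hx
  rcases Relation.ReflTransGen.cases_head h with h' | ⟨b, ⟨hA, _, hbB⟩, _⟩
  · exact absurd h' hne
  · exact ⟨b, hbB, hA⟩

lemma card_le_of_witness (T N : Finset ℕ) (B : ℕ → Finset ℕ)
    (hdisj : ∀ i ∈ T, ∀ j ∈ T, i ≠ j → Disjoint (B i) (B j))
    (hw : ∀ j ∈ T, ∃ b ∈ B j, b ∈ N) : T.card ≤ N.card := by
  classical
  have hch : ∀ j, ∃ b, j ∈ T → b ∈ B j ∧ b ∈ N := by
    intro j
    by_cases h : j ∈ T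
    · obtain ⟨b, hb1, hb2⟩ := hw j h
      exact ⟨b, fun _ => ⟨hb1, hb2⟩⟩
    · exact ⟨0, fun h' => absurd h' h⟩
  choose f hf using hch
  apply Finset.card_le_card_of_injOn f (fun j hj => (hf j hj).2)
  intro i hi j hj hij
  by_contra hne
  exact (Finset.disjoint_left.mp (hdisj i hi j hj hne)) (hf i hi).1 (hij ▸ (hf j hj).1)

lemma erase_card_ge (s : Finset ℕ) (a : ℕ) : s.card - 1 ≤ (s.erase a).card := by
  by_cases h : a ∈ s
  · rw [Finset.card_erase_of_mem h]
  · rw [Finset.erase_eq_of_notMem h]; omega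

lemma K5_nbrs (i : ℕ) (hi : i < 5) :
    ∃ T : Finset ℕ, T.card = 4 ∧ i ∉ T ∧ ∀ j ∈ T, K5Graph.Adj i j := by
  refine ⟨(Finset.range 5).erase i, ?_, Finset.notMem_erase _ _, ?_⟩
  · rw [Finset.card_erase_of_mem (Finset.mem_range.mpr hi)]; rfl
  · intro j hj
    obtain ⟨hji, hjr⟩ := Finset.mem_erase.mp hj
    exact ⟨fun h => hji h.symm, hi, Finset.mem_range.mp hjr⟩

lemma K33_nbrs (i : ℕ) (hi : i < 6) :
    ∃ T : Finset ℕ, T.card = 3 ∧ i ∉ T ∧ ∀ j ∈ T, K33Graph.Adj i j := by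
  by_cases h : i < 3
  · refine ⟨{3, 4, 5}, by decide, by simp; omega, ?_⟩
    intro j hj
    fin_cases hj <;> exact Or.inl ⟨h, by omega, by omega⟩
  · refine ⟨{0, 1, 2}, by decide, by simp; omega, ?_⟩
    intro j hj
    fin_cases hj <;> exact Or.inr ⟨by omega, by omega, by omega⟩

lemma no_minor_of_card (G K : FinGraph) (h : G.verts.card < K.verts.card) :
    ¬ G.HasMinor K := by
  rintro ⟨B, hB1, hB2, _⟩
  classical
  have hch : ∀ i, ∃ b, i ∈ K.verts → b ∈ B i := by
    intro i
    by_cases hi : i ∈ K.verts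
    · obtain ⟨b, hb⟩ := (hB1 i hi).1
      exact ⟨b, fun _ => hb⟩
    · exact ⟨0, fun h' => absurd h' hi⟩
  choose f hf using hch
  have : K.verts.card ≤ G.verts.card := by
    apply Finset.card_le_card_of_injOn f
    · intro i hi
      exact (hB1 i hi).2.1 (by exact_mod_cast hf i hi)
    · intro i hi j hj hij
      by_contra hne
      exact (Finset.disjoint_left.mp (hB2 i hi j hj hne)) (hf i hi) (hij ▸ hf j hj)
  omega

end Helpers

end FinGraph

namespace FinGraph

section D3aCore

variable {G : FinGraph} {p q r p' q' r' : ℕ}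

lemma D3aConfig.swap12 (h : G.D3aConfig p q r p' q' r') : G.D3aConfig q p r q' p' r' := by
  obtain ⟨dp, dq, dr, hpq, hqr, hpr, hpp, hqq, hrr, hp', hq', hr', hd12, hd13, hd23⟩ := h
  refine ⟨dq, dp, dr, G.symm _ _ hpq, hpr, hqr, hqq, hpp, hrr, ?_, ?_, ?_, hd12.symm, hd23, hd13⟩ <;>
    simp only [Set.mem_insert_iff, Set.mem_singleton_iff] at * <;> tauto

lemma D3aConfig.rot (h : G.D3aConfig p q r p' q' r') : G.D3aConfig q r p q' r' p' := by
  obtain ⟨dp, dq, dr, hpq, hqr, hpr, hpp, hqq, hrr, hp', hq', hr', hd12, hd13, hd23⟩ := h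
  refine ⟨dq, dr, dp, hqr, G.symm _ _ hpr, G.symm _ _ hpq, hqq, hrr, hpp, ?_, ?_, ?_,
    hd23, hd12.symm, hd13.symm⟩ <;>
    simp only [Set.mem_insert_iff, Set.mem_singleton_iff] at * <;> tauto

lemma D3aConfig.swap23 (h : G.D3aConfig p q r p' q' r') : G.D3aConfig p r q p' r' q' := by
  obtain ⟨dp, dq, dr, hpq, hqr, hpr, hpp, hqq, hrr, hp', hq', hr', hd12, hd13, hd23⟩ := h
  refine ⟨dp, dr, dq, hpr, G.symm _ _ hqr, hpq, hpp, hrr, hqq, ?_, ?_, ?_,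
    hd13, hd12, hd23.symm⟩ <;>
    simp only [Set.mem_insert_iff, Set.mem_singleton_iff] at * <;> tauto

lemma D3aConfig.pq_ne (h : G.D3aConfig p q r p' q' r') : p ≠ q :=
  fun e => G.loopless q (e ▸ h.2.2.2.1)

lemma D3aConfig.qr_ne (h : G.D3aConfig p q r p' q' r') : q ≠ r :=
  fun e => G.loopless r (e ▸ h.2.2.2.2.1)

lemma D3aConfig.pr_ne (h : G.D3aConfig p q r p' q' r') : p ≠ r :=
  fun e => G.loopless r (e ▸ h.2.2.2.2.2.1)

lemma D3aConfig.pin_p (h : G.D3aConfig p q r p' q' r') :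
    ∀ x, G.Adj p x → x = q ∨ x = r ∨ x = p' := by
  have hp' := h.2.2.2.2.2.2.2.2.2.1
  simp only [Set.mem_insert_iff, Set.mem_singleton_iff, not_or] at hp'
  exact degThreeNbrs G p q r p' h.1 h.qr_ne (fun e => hp'.2.1 e.symm)
    (fun e => hp'.2.2 e.symm) h.2.2.2.1 h.2.2.2.2.2.1 h.2.2.2.2.2.2.1

lemma D3aConfig.pin_q (h : G.D3aConfig p q r p' q' r') :
    ∀ x, G.Adj q x → x = p ∨ x = r ∨ x = q' := by
  have := h.swap12.pin_p
  intro x hx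
  rcases this x hx with h' | h' | h' <;> tauto

lemma D3aConfig.pin_r (h : G.D3aConfig p q r p' q' r') :
    ∀ x, G.Adj r x → x = p ∨ x = q ∨ x = r' := by
  have := h.rot.rot.pin_p
  intro x hx
  rcases this x hx with h' | h' | h' <;> tauto

lemma lone_prime (G K : FinGraph) (B : ℕ → Finset ℕ)
    (hB1 : ∀ v ∈ K.verts, (B v).Nonempty ∧ ↑(B v) ⊆ (↑G.verts : Set ℕ) ∧ G.ConnectedOn ↑(B v))
    (hB2 : ∀ u ∈ K.verts, ∀ v ∈ K.verts, u ≠ v → Disjoint (B u) (B v))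
    (hB3 : ∀ u v, K.Adj u v → ∃ a ∈ B u, ∃ b ∈ B v, G.Adj a b)
    (il l l2 l3 pr : ℕ) (hil : il ∈ K.verts) (hl : l ∈ B il)
    (hT : ∃ T : Finset ℕ, 2 ≤ T.card ∧ (∀ j ∈ T, K.Adj il j) ∧
      (∀ j ∈ T, l2 ∉ B j) ∧ (∀ j ∈ T, l3 ∉ B j))
    (hpin : ∀ x, G.Adj l x → x = l2 ∨ x = l3 ∨ x = pr)
    (hni2 : l2 ∉ B il) (hni3 : l3 ∉ B il) : pr ∈ B il := by
  obtain ⟨T, hTc, hTadj, hT2, hT3⟩ := hT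
  by_cases hsing : ∀ x ∈ B il, x = l
  · exfalso
    have hle : T.card ≤ ({pr} : Finset ℕ).card := by
      apply card_le_of_witness T {pr} B
      · intro i hi j hj hij
        exact hB2 i (K.support _ _ (hTadj i hi)).2 j (K.support _ _ (hTadj j hj)).2 hij
      · intro j hj
        obtain ⟨a, ha, b, hb, hab⟩ := hB3 il j (hTadj j hj)
        have ha' := hsing a ha
        subst ha'
        rcases hpin b hab with rfl | rfl | rfl
        · exact absurd hb (hT2 j hj)
        · exact absurd hb (hT3 j hj)
        · exact ⟨b, hb, Finset.mem_singleton_self _⟩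
    rw [Finset.card_singleton] at hle
    omega
  · push_neg at hsing
    obtain ⟨x, hx, hxne⟩ := hsing
    obtain ⟨y, hy, hady⟩ := firstNbr G ↑(B il) (hB1 il hil).2.2 l x
      (Finset.mem_coe.mpr hl) (Finset.mem_coe.mpr hx) (fun e => hxne e.symm)
    have hy' : y ∈ B il := Finset.mem_coe.mp hy
    rcases hpin y hady with rfl | rfl | rfl
    · exact absurd hy' hni2
    · exact absurd hy' hni3
    · exact hy'

end D3aCore

end FinGraph

namespace FinGraph

lemma d3a_transfer (G H K : FinGraph) (p q r p' q' r' t : ℕ)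
    (hcfg : G.D3aConfig p q r p' q' r') (ht : t ∉ G.verts)
    (hverts : H.verts = (G.verts \ {p, q, r}) ∪ {t})
    (hadjH : ∀ a b, H.Adj a b ↔
      (G.Adj a b ∧ a ∉ ({p, q, r} : Set ℕ) ∧ b ∉ ({p, q, r} : Set ℕ)) ∨
      (a = t ∧ b ∈ ({p', q', r'} : Set ℕ)) ∨
      (b = t ∧ a ∈ ({p', q', r'} : Set ℕ)))
    (B : ℕ → Finset ℕ)
    (hB1 : ∀ v ∈ K.verts, (B v).Nonempty ∧ ↑(B v) ⊆ (↑G.verts : Set ℕ) ∧ G.ConnectedOn ↑(B v))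
    (hB2 : ∀ u ∈ K.verts, ∀ v ∈ K.verts, u ≠ v → Disjoint (B u) (B v))
    (hB3 : ∀ u v, K.Adj u v → ∃ a ∈ B u, ∃ b ∈ B v, G.Adj a b)
    (j? : Option ℕ)
    (h1 : ∀ i ∈ K.verts, some i ≠ j? →
      (p ∈ B i → p' ∈ B i) ∧ (q ∈ B i → q' ∈ B i) ∧ (r ∈ B i → r' ∈ B i))
    (h4 : ∀ i ∈ K.verts, some i ≠ j? →
      ¬(p ∈ B i ∧ q ∈ B i) ∧ ¬(p ∈ B i ∧ r ∈ B i) ∧ ¬(q ∈ B i ∧ r ∈ B i))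
    (h2 : ∀ u ∈ K.verts, ∀ v ∈ K.verts, K.Adj u v → ∀ a ∈ B u, ∀ b ∈ B v,
      (a = p ∨ a = q ∨ a = r) → (b = p ∨ b = q ∨ b = r) → some u = j? ∨ some v = j?)
    (h3 : ∀ j, j? = some j → (p ∈ B j ∨ q ∈ B j ∨ r ∈ B j)) :
    H.HasMinor K := by
  classical
  have hc2 := hcfg
  obtain ⟨dp, dq, dr, hpq, hqr, hpr, hpp, hqq, hrr, hp', hq', hr', hd12, hd13, hd23⟩ := hc2
  have hpinp := hcfg.pin_p
  have hpinq := hcfg.pin_q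
  have hpinr := hcfg.pin_r
  simp only [Set.mem_insert_iff, Set.mem_singleton_iff, not_or] at hp' hq' hr'
  have tnotin : ∀ i ∈ K.verts, t ∉ B i := fun i hi hti => ht (by
    have := (hB1 i hi).2.1 (Finset.mem_coe.mpr hti)
    exact_mod_cast this)
  have Htp' : H.Adj t p' := (hadjH _ _).mpr (Or.inr (Or.inl ⟨rfl, by simp⟩))
  have Htq' : H.Adj t q' := (hadjH _ _).mpr (Or.inr (Or.inl ⟨rfl, by simp⟩))
  have Htr' : H.Adj t r' := (hadjH _ _).mpr (Or.inr (Or.inl ⟨rfl, by simp⟩))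
  have Hp't : H.Adj p' t := (hadjH _ _).mpr (Or.inr (Or.inr ⟨rfl, by simp⟩))
  have Hq't : H.Adj q' t := (hadjH _ _).mpr (Or.inr (Or.inr ⟨rfl, by simp⟩))
  have Hr't : H.Adj r' t := (hadjH _ _).mpr (Or.inr (Or.inr ⟨rfl, by simp⟩))
  have HGadj : ∀ a b, G.Adj a b → ¬(a = p ∨ a = q ∨ a = r) → ¬(b = p ∨ b = q ∨ b = r) →
      H.Adj a b := by
    intro a b hab ha hb
    exact (hadjH _ _).mpr (Or.inl ⟨hab, by simpa [Set.mem_insert_iff] using ha,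
      by simpa [Set.mem_insert_iff] using hb⟩)
  set B' : ℕ → Finset ℕ :=
    fun i => (B i \ {p, q, r}) ∪ (if some i = j? then {t} else ∅) with hB'def
  have hmemB' : ∀ x i, x ∈ B' i ↔ ((x ∈ B i ∧ ¬(x = p ∨ x = q ∨ x = r)) ∨
      (some i = j? ∧ x = t)) := by
    intro x i
    by_cases hj : some i = j? <;>
      simp [hB'def, hj, Finset.mem_sdiff, not_or] <;> tauto
  have hmemHverts : ∀ x, x ∈ G.verts → ¬(x = p ∨ x = q ∨ x = r) → x ∈ H.verts := by
    intro x hx hnx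
    rw [hverts]
    simp only [Finset.mem_union, Finset.mem_sdiff, Finset.mem_insert, Finset.mem_singleton]
    exact Or.inl ⟨hx, hnx⟩
  have htH : t ∈ H.verts := by rw [hverts]; simp
  -- the maps
  set pit : ℕ → ℕ := fun a => if a = p ∨ a = q ∨ a = r then t else a with hpitdef
  set pi0 : ℕ → ℕ := fun a => if a = p then p' else if a = q then q' else if a = r then r' else a
    with hpi0def
  have hpit_lett : ∀ a, (a = p ∨ a = q ∨ a = r) → pit a = t := by
    intro a ha; simp [hpitdef, ha]
  have hpit_id : ∀ a, ¬(a = p ∨ a = q ∨ a = r) → pit a = a := by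
    intro a ha; simp [hpitdef, ha]
  have hpi0_id : ∀ a, ¬(a = p ∨ a = q ∨ a = r) → pi0 a = a := by
    intro a ha
    push_neg at ha
    simp [hpi0def, ha.1, ha.2.1, ha.2.2]
  have hqp_ne : q ≠ p := (hcfg.pq_ne).symm
  have hrp_ne : r ≠ p := (hcfg.pr_ne).symm
  have hrq_ne : r ≠ q := (hcfg.qr_ne).symm
  have hpi0_p : pi0 p = p' := by simp [hpi0def]
  have hpi0_q : pi0 q = q' := by simp [hpi0def, hqp_ne]
  have hpi0_r : pi0 r = r' := by simp [hpi0def, hrp_ne, hrq_ne]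
  refine ⟨B', ?_, ?_, ?_⟩
  · -- condition 1
    intro v hv
    have hconn := (hB1 v hv).2.2
    refine ⟨?_, ?_, ?_⟩
    · -- nonempty
      by_cases hj : some v = j?
      · exact ⟨t, (hmemB' t v).mpr (Or.inr ⟨hj, rfl⟩)⟩
      · by_cases hp2 : p ∈ B v
        · exact ⟨p', (hmemB' p' v).mpr (Or.inl ⟨(h1 v hv hj).1 hp2,
            by push_neg; exact ⟨hp'.1, hp'.2.1, hp'.2.2⟩⟩)⟩
        · by_cases hq2 : q ∈ B v
          · exact ⟨q', (hmemB' q' v).mpr (Or.inl ⟨(h1 v hv hj).2.1 hq2,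
              by push_neg; exact ⟨hq'.1, hq'.2.1, hq'.2.2⟩⟩)⟩
          · by_cases hr2 : r ∈ B v
            · exact ⟨r', (hmemB' r' v).mpr (Or.inl ⟨(h1 v hv hj).2.2 hr2,
                by push_neg; exact ⟨hr'.1, hr'.2.1, hr'.2.2⟩⟩)⟩
            · obtain ⟨x, hx⟩ := (hB1 v hv).1
              refine ⟨x, (hmemB' x v).mpr (Or.inl ⟨hx, ?_⟩)⟩
              rintro (rfl | rfl | rfl) <;> tauto
    · -- subset
      intro x hx
      rcases (hmemB' x v).mp (Finset.mem_coe.mp hx) with ⟨hxB, hnx⟩ | ⟨_, rfl⟩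
      · have hxG : x ∈ G.verts := by
          have := (hB1 v hv).2.1 (Finset.mem_coe.mpr hxB)
          exact_mod_cast this
        exact Finset.mem_coe.mpr (hmemHverts x hxG hnx)
      · exact Finset.mem_coe.mpr htH
    · -- connectivity
      by_cases hj : some v = j?
      · apply connMap G H ↑(B v) ↑(B' v) pit hconn
        · intro a ha
          by_cases la : a = p ∨ a = q ∨ a = r
          · rw [hpit_lett a la]
            exact Finset.mem_coe.mpr ((hmemB' t v).mpr (Or.inr ⟨hj, rfl⟩))
          · rw [hpit_id a la]
            exact Finset.mem_coe.mpr ((hmemB' a v).mpr (Or.inl ⟨Finset.mem_coe.mp ha, la⟩))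
        · intro a b hab haB hbB
          by_cases la : a = p ∨ a = q ∨ a = r <;> by_cases lb : b = p ∨ b = q ∨ b = r
          · exact Or.inl (by rw [hpit_lett a la, hpit_lett b lb])
          · refine Or.inr ?_
            rw [hpit_lett a la, hpit_id b lb]
            rcases la with rfl | rfl | rfl
            · rcases hpinp b hab with rfl | rfl | rfl <;> tauto
            · rcases hpinq b hab with rfl | rfl | rfl <;> tauto
            · rcases hpinr b hab with rfl | rfl | rfl <;> tauto
          · refine Or.inr ?_
            rw [hpit_lett b lb, hpit_id a la]
            rcases lb with rfl | rfl | rfl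
            · rcases hpinp a (G.symm _ _ hab) with rfl | rfl | rfl <;> tauto
            · rcases hpinq a (G.symm _ _ hab) with rfl | rfl | rfl <;> tauto
            · rcases hpinr a (G.symm _ _ hab) with rfl | rfl | rfl <;> tauto
          · rw [hpit_id a la, hpit_id b lb]
            exact Or.inr (HGadj a b hab la lb)
        · intro x hx
          rcases (hmemB' x v).mp (Finset.mem_coe.mp hx) with ⟨hxB, hnx⟩ | ⟨_, rfl⟩
          · exact ⟨x, Finset.mem_coe.mpr hxB, hpit_id x hnx⟩
          · rcases h3 v hj.symm with hl | hl | hl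
            · exact ⟨p, Finset.mem_coe.mpr hl, hpit_lett p (by tauto)⟩
            · exact ⟨q, Finset.mem_coe.mpr hl, hpit_lett q (by tauto)⟩
            · exact ⟨r, Finset.mem_coe.mpr hl, hpit_lett r (by tauto)⟩
      · apply connMap G H ↑(B v) ↑(B' v) pi0 hconn
        · intro a ha
          have haB := Finset.mem_coe.mp ha
          by_cases la : a = p ∨ a = q ∨ a = r
          · rcases la with rfl | rfl | rfl
            · rw [hpi0_p]
              exact Finset.mem_coe.mpr ((hmemB' p' v).mpr (Or.inl ⟨(h1 v hv hj).1 haB,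
                by push_neg; exact ⟨hp'.1, hp'.2.1, hp'.2.2⟩⟩))
            · rw [hpi0_q]
              exact Finset.mem_coe.mpr ((hmemB' q' v).mpr (Or.inl ⟨(h1 v hv hj).2.1 haB,
                by push_neg; exact ⟨hq'.1, hq'.2.1, hq'.2.2⟩⟩))
            · rw [hpi0_r]
              exact Finset.mem_coe.mpr ((hmemB' r' v).mpr (Or.inl ⟨(h1 v hv hj).2.2 haB,
                by push_neg; exact ⟨hr'.1, hr'.2.1, hr'.2.2⟩⟩))
          · rw [hpi0_id a la]
            exact Finset.mem_coe.mpr ((hmemB' a v).mpr (Or.inl ⟨haB, la⟩))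
        · intro a b hab haB hbB
          have haB' := Finset.mem_coe.mp haB
          have hbB' := Finset.mem_coe.mp hbB
          by_cases la : a = p ∨ a = q ∨ a = r <;> by_cases lb : b = p ∨ b = q ∨ b = r
          · exfalso
            have h4' := h4 v hv hj
            rcases la with rfl | rfl | rfl <;> rcases lb with rfl | rfl | rfl
            · exact G.loopless _ hab
            · exact h4'.1 ⟨haB', hbB'⟩
            · exact h4'.2.1 ⟨haB', hbB'⟩
            · exact h4'.1 ⟨hbB', haB'⟩
            · exact G.loopless _ hab
            · exact h4'.2.2 ⟨haB', hbB'⟩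
            · exact h4'.2.1 ⟨hbB', haB'⟩
            · exact h4'.2.2 ⟨hbB', haB'⟩
            · exact G.loopless _ hab
          · refine Or.inl ?_
            rw [hpi0_id b lb]
            rcases la with rfl | rfl | rfl
            · rcases hpinp b hab with rfl | rfl | rfl
              · exact absurd (Or.inr (Or.inl rfl)) lb
              · exact absurd (Or.inr (Or.inr rfl)) lb
              · exact hpi0_p
            · rcases hpinq b hab with rfl | rfl | rfl
              · exact absurd (Or.inl rfl) lb
              · exact absurd (Or.inr (Or.inr rfl)) lb
              · exact hpi0_q
            · rcases hpinr b hab with rfl | rfl | rfl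
              · exact absurd (Or.inl rfl) lb
              · exact absurd (Or.inr (Or.inl rfl)) lb
              · exact hpi0_r
          · refine Or.inl ?_
            rw [hpi0_id a la]
            rcases lb with rfl | rfl | rfl
            · rcases hpinp a (G.symm _ _ hab) with rfl | rfl | rfl
              · exact absurd (Or.inr (Or.inl rfl)) la
              · exact absurd (Or.inr (Or.inr rfl)) la
              · exact hpi0_p.symm
            · rcases hpinq a (G.symm _ _ hab) with rfl | rfl | rfl
              · exact absurd (Or.inl rfl) la
              · exact absurd (Or.inr (Or.inr rfl)) la
              · exact hpi0_q.symm
            · rcases hpinr a (G.symm _ _ hab) with rfl | rfl | rfl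
              · exact absurd (Or.inl rfl) la
              · exact absurd (Or.inr (Or.inl rfl)) la
              · exact hpi0_r.symm
          · rw [hpi0_id a la, hpi0_id b lb]
            exact Or.inr (HGadj a b hab la lb)
        · intro x hx
          rcases (hmemB' x v).mp (Finset.mem_coe.mp hx) with ⟨hxB, hnx⟩ | ⟨hjx, rfl⟩
          · exact ⟨x, Finset.mem_coe.mpr hxB, hpi0_id x hnx⟩
          · exact absurd hjx hj
  · -- condition 2 : disjointness
    intro u hu v hv huv
    rw [Finset.disjoint_left]
    intro x hxu hxv
    rcases (hmemB' x u).mp hxu with ⟨hxBu, hnx⟩ | ⟨hju, hxt⟩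
    · rcases (hmemB' x v).mp hxv with ⟨hxBv, _⟩ | ⟨_, hxt⟩
      · exact (Finset.disjoint_left.mp (hB2 u hu v hv huv)) hxBu hxBv
      · exact tnotin u hu (hxt ▸ hxBu)
    · rcases (hmemB' x v).mp hxv with ⟨hxBv, _⟩ | ⟨hjv, _⟩
      · exact tnotin v hv (hxt ▸ hxBv)
      · exact huv (Option.some.inj (hju.trans hjv.symm))
  · -- condition 3 : adjacency
    intro u v huv
    have hu := (K.support u v huv).1
    have hv := (K.support u v huv).2
    have hune : u ≠ v := fun e => K.loopless v (e ▸ huv)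
    obtain ⟨a, haB, b, hbB, hab⟩ := hB3 u v huv
    by_cases la : a = p ∨ a = q ∨ a = r <;> by_cases lb : b = p ∨ b = q ∨ b = r
    · rcases h2 u hu v hv huv a haB b hbB la lb with hju | hjv
      · have hvj : some v ≠ j? := fun h => hune (Option.some.inj (hju.trans h.symm))
        have htu : t ∈ B' u := (hmemB' t u).mpr (Or.inr ⟨hju, rfl⟩)
        rcases lb with rfl | rfl | rfl
        · exact ⟨t, htu, p', (hmemB' p' v).mpr (Or.inl ⟨(h1 v hv hvj).1 hbB,
            by push_neg; exact ⟨hp'.1, hp'.2.1, hp'.2.2⟩⟩), Htp'⟩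
        · exact ⟨t, htu, q', (hmemB' q' v).mpr (Or.inl ⟨(h1 v hv hvj).2.1 hbB,
            by push_neg; exact ⟨hq'.1, hq'.2.1, hq'.2.2⟩⟩), Htq'⟩
        · exact ⟨t, htu, r', (hmemB' r' v).mpr (Or.inl ⟨(h1 v hv hvj).2.2 hbB,
            by push_neg; exact ⟨hr'.1, hr'.2.1, hr'.2.2⟩⟩), Htr'⟩
      · have huj : some u ≠ j? := fun h => hune (Option.some.inj (h.trans hjv.symm))
        have htv : t ∈ B' v := (hmemB' t v).mpr (Or.inr ⟨hjv, rfl⟩)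
        rcases la with rfl | rfl | rfl
        · exact ⟨p', (hmemB' p' u).mpr (Or.inl ⟨(h1 u hu huj).1 haB,
            by push_neg; exact ⟨hp'.1, hp'.2.1, hp'.2.2⟩⟩), t, htv, Hp't⟩
        · exact ⟨q', (hmemB' q' u).mpr (Or.inl ⟨(h1 u hu huj).2.1 haB,
            by push_neg; exact ⟨hq'.1, hq'.2.1, hq'.2.2⟩⟩), t, htv, Hq't⟩
        · exact ⟨r', (hmemB' r' u).mpr (Or.inl ⟨(h1 u hu huj).2.2 haB,
            by push_neg; exact ⟨hr'.1, hr'.2.1, hr'.2.2⟩⟩), t, htv, Hr't⟩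
    · -- a letter, b not
      have hbmem : b ∈ B' v := (hmemB' b v).mpr (Or.inl ⟨hbB, lb⟩)
      have hbprime : b = p' ∨ b = q' ∨ b = r' := by
        rcases la with rfl | rfl | rfl
        · rcases hpinp b hab with rfl | rfl | rfl
          · exact absurd (Or.inr (Or.inl rfl)) lb
          · exact absurd (Or.inr (Or.inr rfl)) lb
          · exact Or.inl rfl
        · rcases hpinq b hab with rfl | rfl | rfl
          · exact absurd (Or.inl rfl) lb
          · exact absurd (Or.inr (Or.inr rfl)) lb
          · exact Or.inr (Or.inl rfl)
        · rcases hpinr b hab with rfl | rfl | rfl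
          · exact absurd (Or.inl rfl) lb
          · exact absurd (Or.inr (Or.inl rfl)) lb
          · exact Or.inr (Or.inr rfl)
      by_cases hju : some u = j?
      · refine ⟨t, (hmemB' t u).mpr (Or.inr ⟨hju, rfl⟩), b, hbmem, ?_⟩
        rcases hbprime with rfl | rfl | rfl <;> assumption
      · exfalso
        have h1' := h1 u hu hju
        have : b ∈ B u := by
          rcases la with rfl | rfl | rfl
          · rcases hpinp b hab with rfl | rfl | rfl
            · exact absurd (Or.inr (Or.inl rfl)) lb
            · exact absurd (Or.inr (Or.inr rfl)) lb
            · exact h1'.1 haB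
          · rcases hpinq b hab with rfl | rfl | rfl
            · exact absurd (Or.inl rfl) lb
            · exact absurd (Or.inr (Or.inr rfl)) lb
            · exact h1'.2.1 haB
          · rcases hpinr b hab with rfl | rfl | rfl
            · exact absurd (Or.inl rfl) lb
            · exact absurd (Or.inr (Or.inl rfl)) lb
            · exact h1'.2.2 haB
        exact (Finset.disjoint_left.mp (hB2 u hu v hv hune)) this hbB
    · -- b letter, a not
      have hamem : a ∈ B' u := (hmemB' a u).mpr (Or.inl ⟨haB, la⟩)
      have haprime : a = p' ∨ a = q' ∨ a = r' := by
        rcases lb with rfl | rfl | rfl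
        · rcases hpinp a (G.symm _ _ hab) with rfl | rfl | rfl
          · exact absurd (Or.inr (Or.inl rfl)) la
          · exact absurd (Or.inr (Or.inr rfl)) la
          · exact Or.inl rfl
        · rcases hpinq a (G.symm _ _ hab) with rfl | rfl | rfl
          · exact absurd (Or.inl rfl) la
          · exact absurd (Or.inr (Or.inr rfl)) la
          · exact Or.inr (Or.inl rfl)
        · rcases hpinr a (G.symm _ _ hab) with rfl | rfl | rfl
          · exact absurd (Or.inl rfl) la
          · exact absurd (Or.inr (Or.inl rfl)) la
          · exact Or.inr (Or.inr rfl)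
      by_cases hjv : some v = j?
      · refine ⟨a, hamem, t, (hmemB' t v).mpr (Or.inr ⟨hjv, rfl⟩), ?_⟩
        rcases haprime with rfl | rfl | rfl <;> assumption
      · exfalso
        have h1' := h1 v hv hjv
        have : a ∈ B v := by
          rcases lb with rfl | rfl | rfl
          · rcases hpinp a (G.symm _ _ hab) with rfl | rfl | rfl
            · exact absurd (Or.inr (Or.inl rfl)) la
            · exact absurd (Or.inr (Or.inr rfl)) la
            · exact h1'.1 hbB
          · rcases hpinq a (G.symm _ _ hab) with rfl | rfl | rfl
            · exact absurd (Or.inl rfl) la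
            · exact absurd (Or.inr (Or.inr rfl)) la
            · exact h1'.2.1 hbB
          · rcases hpinr a (G.symm _ _ hab) with rfl | rfl | rfl
            · exact absurd (Or.inl rfl) la
            · exact absurd (Or.inr (Or.inl rfl)) la
            · exact h1'.2.2 hbB
        exact (Finset.disjoint_left.mp (hB2 u hu v hv hune)) haB this
    · exact ⟨a, (hmemB' a u).mpr (Or.inl ⟨haB, la⟩), b,
        (hmemB' b v).mpr (Or.inl ⟨hbB, lb⟩), HGadj a b hab la lb⟩

end FinGraph

namespace FinGraph

lemma uniq_mem (K : FinGraph) (B : ℕ → Finset ℕ)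
    (hB2 : ∀ u ∈ K.verts, ∀ v ∈ K.verts, u ≠ v → Disjoint (B u) (B v))
    (x i j : ℕ) (hi : i ∈ K.verts) (hj : j ∈ K.verts)
    (hxi : x ∈ B i) (hxj : x ∈ B j) : i = j := by
  by_contra hne
  exact (Finset.disjoint_left.mp (hB2 i hi j hj hne)) hxi hxj

section SubLemmas

variable {G H K : FinGraph} {p q r p' q' r' t : ℕ} {B : ℕ → Finset ℕ}

lemma subL_none
    (hcfg : G.D3aConfig p q r p' q' r') (ht : t ∉ G.verts)
    (hverts : H.verts = (G.verts \ {p, q, r}) ∪ {t})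
    (hadjH : ∀ a b, H.Adj a b ↔
      (G.Adj a b ∧ a ∉ ({p, q, r} : Set ℕ) ∧ b ∉ ({p, q, r} : Set ℕ)) ∨
      (a = t ∧ b ∈ ({p', q', r'} : Set ℕ)) ∨
      (b = t ∧ a ∈ ({p', q', r'} : Set ℕ)))
    (hB1 : ∀ v ∈ K.verts, (B v).Nonempty ∧ ↑(B v) ⊆ (↑G.verts : Set ℕ) ∧ G.ConnectedOn ↑(B v))
    (hB2 : ∀ u ∈ K.verts, ∀ v ∈ K.verts, u ≠ v → Disjoint (B u) (B v))
    (hB3 : ∀ u v, K.Adj u v → ∃ a ∈ B u, ∃ b ∈ B v, G.Adj a b)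
    (hnp : ∀ i ∈ K.verts, p ∉ B i) (hnq : ∀ i ∈ K.verts, q ∉ B i)
    (hnr : ∀ i ∈ K.verts, r ∉ B i) :
    H.HasMinor K := by
  apply d3a_transfer G H K p q r p' q' r' t hcfg ht hverts hadjH B hB1 hB2 hB3 none
  · intro i hi _
    exact ⟨fun h => absurd h (hnp i hi), fun h => absurd h (hnq i hi),
      fun h => absurd h (hnr i hi)⟩
  · intro i hi _
    exact ⟨fun h => hnp i hi h.1, fun h => hnp i hi h.1, fun h => hnq i hi h.1⟩
  · intro u hu v hv _ a haB b hbB la _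
    rcases la with rfl | rfl | rfl
    · exact absurd haB (hnp u hu)
    · exact absurd haB (hnq u hu)
    · exact absurd haB (hnr u hu)
  · intro j hj
    exact absurd hj (by simp)

lemma subL_in_one
    (hcfg : G.D3aConfig p q r p' q' r') (ht : t ∉ G.verts)
    (hverts : H.verts = (G.verts \ {p, q, r}) ∪ {t})
    (hadjH : ∀ a b, H.Adj a b ↔
      (G.Adj a b ∧ a ∉ ({p, q, r} : Set ℕ) ∧ b ∉ ({p, q, r} : Set ℕ)) ∨
      (a = t ∧ b ∈ ({p', q', r'} : Set ℕ)) ∨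
      (b = t ∧ a ∈ ({p', q', r'} : Set ℕ)))
    (hB1 : ∀ v ∈ K.verts, (B v).Nonempty ∧ ↑(B v) ⊆ (↑G.verts : Set ℕ) ∧ G.ConnectedOn ↑(B v))
    (hB2 : ∀ u ∈ K.verts, ∀ v ∈ K.verts, u ≠ v → Disjoint (B u) (B v))
    (hB3 : ∀ u v, K.Adj u v → ∃ a ∈ B u, ∃ b ∈ B v, G.Adj a b)
    (ip : ℕ) (hip : ip ∈ K.verts) (hp : p ∈ B ip)
    (huq : ∀ i ∈ K.verts, q ∈ B i → i = ip)
    (hur : ∀ i ∈ K.verts, r ∈ B i → i = ip) :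
    H.HasMinor K := by
  have hup : ∀ i ∈ K.verts, p ∈ B i → i = ip :=
    fun i hi h => uniq_mem K B hB2 p i ip hi hip h hp
  apply d3a_transfer G H K p q r p' q' r' t hcfg ht hverts hadjH B hB1 hB2 hB3 (some ip)
  · intro i hi hne
    have hne' : i ≠ ip := fun e => hne (by rw [e])
    exact ⟨fun h => absurd (hup i hi h) hne', fun h => absurd (huq i hi h) hne',
      fun h => absurd (hur i hi h) hne'⟩
  · intro i hi hne
    have hne' : i ≠ ip := fun e => hne (by rw [e])
    exact ⟨fun h => hne' (hup i hi h.1), fun h => hne' (hup i hi h.1),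
      fun h => hne' (huq i hi h.1)⟩
  · intro u hu v hv _ a haB b hbB la _
    rcases la with rfl | rfl | rfl
    · exact Or.inl (by rw [hup u hu haB])
    · exact Or.inl (by rw [huq u hu haB])
    · exact Or.inl (by rw [hur u hu haB])
  · intro j hj
    have : ip = j := Option.some.inj hj
    exact Or.inl (this ▸ hp)

lemma subL_two
    (hcfg : G.D3aConfig p q r p' q' r') (ht : t ∉ G.verts)
    (hverts : H.verts = (G.verts \ {p, q, r}) ∪ {t})
    (hadjH : ∀ a b, H.Adj a b ↔
      (G.Adj a b ∧ a ∉ ({p, q, r} : Set ℕ) ∧ b ∉ ({p, q, r} : Set ℕ)) ∨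
      (a = t ∧ b ∈ ({p', q', r'} : Set ℕ)) ∨
      (b = t ∧ a ∈ ({p', q', r'} : Set ℕ)))
    (hB1 : ∀ v ∈ K.verts, (B v).Nonempty ∧ ↑(B v) ⊆ (↑G.verts : Set ℕ) ∧ G.ConnectedOn ↑(B v))
    (hB2 : ∀ u ∈ K.verts, ∀ v ∈ K.verts, u ≠ v → Disjoint (B u) (B v))
    (hB3 : ∀ u v, K.Adj u v → ∃ a ∈ B u, ∃ b ∈ B v, G.Adj a b)
    (hnb : ∀ i ∈ K.verts, ∃ T : Finset ℕ, 3 ≤ T.card ∧ i ∉ T ∧ ∀ j ∈ T, K.Adj i j)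
    (ip iq : ℕ) (hip : ip ∈ K.verts) (hiq : iq ∈ K.verts) (hipq : ip ≠ iq)
    (hp : p ∈ B ip) (hq : q ∈ B iq)
    (hnr : ∀ i ∈ K.verts, r ∉ B i) :
    H.HasMinor K := by
  have hup : ∀ i ∈ K.verts, p ∈ B i → i = ip :=
    fun i hi h => uniq_mem K B hB2 p i ip hi hip h hp
  have huq : ∀ i ∈ K.verts, q ∈ B i → i = iq :=
    fun i hi h => uniq_mem K B hB2 q i iq hi hiq h hq
  -- q' ∈ B iq
  have hq' : q' ∈ B iq := by
    obtain ⟨T0, hT0c, hT0i, hT0a⟩ := hnb iq hiq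
    apply lone_prime G K B hB1 hB2 hB3 iq q r p q' hiq hq
    · refine ⟨T0.erase ip, ?_, ?_, ?_, ?_⟩
      · have := erase_card_ge T0 ip; omega
      · intro j hj; exact hT0a j (Finset.mem_of_mem_erase hj)
      · intro j hj
        exact hnr j (K.support _ _ (hT0a j (Finset.mem_of_mem_erase hj))).2
      · intro j hj hpj
        exact (Finset.ne_of_mem_erase hj)
          (hup j (K.support _ _ (hT0a j (Finset.mem_of_mem_erase hj))).2 hpj)
    · intro x hx
      rcases hcfg.pin_q x hx with h | h | h <;> tauto
    · exact hnr iq hiq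
    · exact fun h => hipq (hup iq hiq h).symm
  apply d3a_transfer G H K p q r p' q' r' t hcfg ht hverts hadjH B hB1 hB2 hB3 (some ip)
  · intro i hi hne
    have hne' : i ≠ ip := fun e => hne (by rw [e])
    refine ⟨fun h => absurd (hup i hi h) hne', fun h => ?_, fun h => absurd h (hnr i hi)⟩
    have : i = iq := huq i hi h
    exact this ▸ hq'
  · intro i hi hne
    have hne' : i ≠ ip := fun e => hne (by rw [e])
    exact ⟨fun h => hne' (hup i hi h.1), fun h => hne' (hup i hi h.1),
      fun h => hnr i hi h.2⟩
  · intro u hu v hv huv a haB b hbB la lb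
    have hune : u ≠ v := fun e => K.loopless v (e ▸ huv)
    rcases la with rfl | rfl | rfl
    · exact Or.inl (by rw [hup u hu haB])
    · rcases lb with rfl | rfl | rfl
      · exact Or.inr (by rw [hup v hv hbB])
      · exact absurd ((huq u hu haB).trans (huq v hv hbB).symm) hune
      · exact absurd hbB (hnr v hv)
    · exact absurd haB (hnr u hu)
  · intro j hj
    have : ip = j := Option.some.inj hj
    exact Or.inl (this ▸ hp)

lemma subL_pair_single
    (hcfg : G.D3aConfig p q r p' q' r') (ht : t ∉ G.verts)
    (hverts : H.verts = (G.verts \ {p, q, r}) ∪ {t})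
    (hadjH : ∀ a b, H.Adj a b ↔
      (G.Adj a b ∧ a ∉ ({p, q, r} : Set ℕ) ∧ b ∉ ({p, q, r} : Set ℕ)) ∨
      (a = t ∧ b ∈ ({p', q', r'} : Set ℕ)) ∨
      (b = t ∧ a ∈ ({p', q', r'} : Set ℕ)))
    (hB1 : ∀ v ∈ K.verts, (B v).Nonempty ∧ ↑(B v) ⊆ (↑G.verts : Set ℕ) ∧ G.ConnectedOn ↑(B v))
    (hB2 : ∀ u ∈ K.verts, ∀ v ∈ K.verts, u ≠ v → Disjoint (B u) (B v))
    (hB3 : ∀ u v, K.Adj u v → ∃ a ∈ B u, ∃ b ∈ B v, G.Adj a b)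
    (hnb : ∀ i ∈ K.verts, ∃ T : Finset ℕ, 3 ≤ T.card ∧ i ∉ T ∧ ∀ j ∈ T, K.Adj i j)
    (ip ir : ℕ) (hip : ip ∈ K.verts) (hir : ir ∈ K.verts) (hipr : ip ≠ ir)
    (hp : p ∈ B ip) (hq : q ∈ B ip) (hr : r ∈ B ir) :
    H.HasMinor K := by
  have hup : ∀ i ∈ K.verts, p ∈ B i → i = ip :=
    fun i hi h => uniq_mem K B hB2 p i ip hi hip h hp
  have huq : ∀ i ∈ K.verts, q ∈ B i → i = ip :=
    fun i hi h => uniq_mem K B hB2 q i ip hi hip h hq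
  have hur : ∀ i ∈ K.verts, r ∈ B i → i = ir :=
    fun i hi h => uniq_mem K B hB2 r i ir hi hir h hr
  have hr' : r' ∈ B ir := by
    obtain ⟨T0, hT0c, hT0i, hT0a⟩ := hnb ir hir
    apply lone_prime G K B hB1 hB2 hB3 ir r p q r' hir hr
    · refine ⟨T0.erase ip, ?_, ?_, ?_, ?_⟩
      · have := erase_card_ge T0 ip; omega
      · intro j hj; exact hT0a j (Finset.mem_of_mem_erase hj)
      · intro j hj hpj
        exact (Finset.ne_of_mem_erase hj)
          (hup j (K.support _ _ (hT0a j (Finset.mem_of_mem_erase hj))).2 hpj)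
      · intro j hj hqj
        exact (Finset.ne_of_mem_erase hj)
          (huq j (K.support _ _ (hT0a j (Finset.mem_of_mem_erase hj))).2 hqj)
    · exact hcfg.pin_r
    · exact fun h => hipr ((hup ir hir h).symm)
    · exact fun h => hipr ((huq ir hir h).symm)
  apply d3a_transfer G H K p q r p' q' r' t hcfg ht hverts hadjH B hB1 hB2 hB3 (some ip)
  · intro i hi hne
    have hne' : i ≠ ip := fun e => hne (by rw [e])
    refine ⟨fun h => absurd (hup i hi h) hne', fun h => absurd (huq i hi h) hne', fun h => ?_⟩
    have : i = ir := hur i hi h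
    exact this ▸ hr'
  · intro i hi hne
    have hne' : i ≠ ip := fun e => hne (by rw [e])
    exact ⟨fun h => hne' (hup i hi h.1), fun h => hne' (hup i hi h.1),
      fun h => hne' (huq i hi h.1)⟩
  · intro u hu v hv huv a haB b hbB la lb
    have hune : u ≠ v := fun e => K.loopless v (e ▸ huv)
    rcases la with rfl | rfl | rfl
    · exact Or.inl (by rw [hup u hu haB])
    · exact Or.inl (by rw [huq u hu haB])
    · rcases lb with rfl | rfl | rfl
      · exact Or.inr (by rw [hup v hv hbB])
      · exact Or.inr (by rw [huq v hv hbB])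
      · exact absurd ((hur u hu haB).trans (hur v hv hbB).symm) hune
  · intro j hj
    have : ip = j := Option.some.inj hj
    exact Or.inl (this ▸ hp)

lemma subL_dist_lone
    (hcfg : G.D3aConfig p q r p' q' r') (ht : t ∉ G.verts)
    (hverts : H.verts = (G.verts \ {p, q, r}) ∪ {t})
    (hadjH : ∀ a b, H.Adj a b ↔
      (G.Adj a b ∧ a ∉ ({p, q, r} : Set ℕ) ∧ b ∉ ({p, q, r} : Set ℕ)) ∨
      (a = t ∧ b ∈ ({p', q', r'} : Set ℕ)) ∨
      (b = t ∧ a ∈ ({p', q', r'} : Set ℕ)))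
    (hB1 : ∀ v ∈ K.verts, (B v).Nonempty ∧ ↑(B v) ⊆ (↑G.verts : Set ℕ) ∧ G.ConnectedOn ↑(B v))
    (hB2 : ∀ u ∈ K.verts, ∀ v ∈ K.verts, u ≠ v → Disjoint (B u) (B v))
    (hB3 : ∀ u v, K.Adj u v → ∃ a ∈ B u, ∃ b ∈ B v, G.Adj a b)
    (hnb : ∀ i ∈ K.verts, ∃ T : Finset ℕ, 3 ≤ T.card ∧ i ∉ T ∧ ∀ j ∈ T, K.Adj i j)
    (ip iq ir : ℕ) (hip : ip ∈ K.verts) (hiq : iq ∈ K.verts) (hir : ir ∈ K.verts)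
    (hipq : ip ≠ iq) (hipr : ip ≠ ir) (hiqr : iq ≠ ir)
    (hp : p ∈ B ip) (hq : q ∈ B iq) (hr : r ∈ B ir)
    (hApq : ¬ K.Adj ip iq) :
    H.HasMinor K := by
  have hup : ∀ i ∈ K.verts, p ∈ B i → i = ip :=
    fun i hi h => uniq_mem K B hB2 p i ip hi hip h hp
  have huq : ∀ i ∈ K.verts, q ∈ B i → i = iq :=
    fun i hi h => uniq_mem K B hB2 q i iq hi hiq h hq
  have hur : ∀ i ∈ K.verts, r ∈ B i → i = ir :=
    fun i hi h => uniq_mem K B hB2 r i ir hi hir h hr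
  have hp' : p' ∈ B ip := by
    obtain ⟨T0, hT0c, hT0i, hT0a⟩ := hnb ip hip
    apply lone_prime G K B hB1 hB2 hB3 ip p q r p' hip hp
    · refine ⟨T0.erase ir, ?_, ?_, ?_, ?_⟩
      · have := erase_card_ge T0 ir; omega
      · intro j hj; exact hT0a j (Finset.mem_of_mem_erase hj)
      · intro j hj hqj
        have hj' := hT0a j (Finset.mem_of_mem_erase hj)
        have : j = iq := huq j (K.support _ _ hj').2 hqj
        exact hApq (this ▸ hj')
      · intro j hj hrj
        exact (Finset.ne_of_mem_erase hj)
          (hur j (K.support _ _ (hT0a j (Finset.mem_of_mem_erase hj))).2 hrj)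
    · exact hcfg.pin_p
    · exact fun h => hipq (huq ip hip h)
    · exact fun h => hipr (hur ip hip h)
  have hq' : q' ∈ B iq := by
    obtain ⟨T0, hT0c, hT0i, hT0a⟩ := hnb iq hiq
    apply lone_prime G K B hB1 hB2 hB3 iq q p r q' hiq hq
    · refine ⟨T0.erase ir, ?_, ?_, ?_, ?_⟩
      · have := erase_card_ge T0 ir; omega
      · intro j hj; exact hT0a j (Finset.mem_of_mem_erase hj)
      · intro j hj hpj
        have hj' := hT0a j (Finset.mem_of_mem_erase hj)
        have : j = ip := hup j (K.support _ _ hj').2 hpj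
        exact hApq (K.symm _ _ (this ▸ hj'))
      · intro j hj hrj
        exact (Finset.ne_of_mem_erase hj)
          (hur j (K.support _ _ (hT0a j (Finset.mem_of_mem_erase hj))).2 hrj)
    · exact hcfg.pin_q
    · exact fun h => hipq.symm (hup iq hiq h)
    · exact fun h => hiqr (hur iq hiq h)
  apply d3a_transfer G H K p q r p' q' r' t hcfg ht hverts hadjH B hB1 hB2 hB3 (some ir)
  · intro i hi hne
    have hne' : i ≠ ir := fun e => hne (by rw [e])
    refine ⟨fun h => ?_, fun h => ?_, fun h => absurd (hur i hi h) hne'⟩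
    · have : i = ip := hup i hi h
      exact this ▸ hp'
    · have : i = iq := huq i hi h
      exact this ▸ hq'
  · intro i hi hne
    exact ⟨fun h => hipq ((hup i hi h.1).symm.trans (huq i hi h.2)),
      fun h => hipr ((hup i hi h.1).symm.trans (hur i hi h.2)),
      fun h => hiqr ((huq i hi h.1).symm.trans (hur i hi h.2))⟩
  · intro u hu v hv huv a haB b hbB la lb
    have hune : u ≠ v := fun e => K.loopless v (e ▸ huv)
    rcases la with rfl | rfl | rfl
    · rcases lb with rfl | rfl | rfl
      · exact absurd ((hup u hu haB).trans (hup v hv hbB).symm) hune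
      · exact absurd (((hup u hu haB) ▸ (huq v hv hbB) ▸ huv)) hApq
      · exact Or.inr (by rw [hur v hv hbB])
    · rcases lb with rfl | rfl | rfl
      · exact absurd (K.symm _ _ (((hup v hv hbB) ▸ (huq u hu haB) ▸ huv))) hApq
      · exact absurd ((huq u hu haB).trans (huq v hv hbB).symm) hune
      · exact Or.inr (by rw [hur v hv hbB])
    · exact Or.inl (by rw [hur u hu haB])
  · intro j hj
    have : ir = j := Option.some.inj hj
    exact Or.inr (Or.inr (this ▸ hr))

end SubLemmas

end FinGraph

namespace FinGraph

lemma d3a_K5_dist (G H : FinGraph) (p q r p' q' r' t : ℕ)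
    (hcfg : G.D3aConfig p q r p' q' r') (ht : t ∉ G.verts)
    (hverts : H.verts = (G.verts \ {p, q, r}) ∪ {t})
    (hadjH : ∀ a b, H.Adj a b ↔
      (G.Adj a b ∧ a ∉ ({p, q, r} : Set ℕ) ∧ b ∉ ({p, q, r} : Set ℕ)) ∨
      (a = t ∧ b ∈ ({p', q', r'} : Set ℕ)) ∨
      (b = t ∧ a ∈ ({p', q', r'} : Set ℕ)))
    (B : ℕ → Finset ℕ)
    (hB1 : ∀ v ∈ K5Graph.verts, (B v).Nonempty ∧ ↑(B v) ⊆ (↑G.verts : Set ℕ) ∧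
      G.ConnectedOn ↑(B v))
    (hB2 : ∀ u ∈ K5Graph.verts, ∀ v ∈ K5Graph.verts, u ≠ v → Disjoint (B u) (B v))
    (hB3 : ∀ u v, K5Graph.Adj u v → ∃ a ∈ B u, ∃ b ∈ B v, G.Adj a b)
    (ip iq ir : ℕ) (hip : ip ∈ K5Graph.verts) (hiq : iq ∈ K5Graph.verts)
    (hir : ir ∈ K5Graph.verts)
    (hipq : ip ≠ iq) (hipr : ip ≠ ir) (hiqr : iq ≠ ir)
    (hp : p ∈ B ip) (hq : q ∈ B iq) (hr : r ∈ B ir) :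
    H.HasMinor K33Graph := by
  classical
  have hc2 := hcfg
  obtain ⟨dp, dq, dr, hpq, hqr, hpr, hpp, hqq, hrr, hnp', hnq', hnr', hd12, hd13, hd23⟩ := hc2
  simp only [Set.mem_insert_iff, Set.mem_singleton_iff, not_or] at hnp' hnq' hnr'
  have hpinp := hcfg.pin_p
  have hpinq := hcfg.pin_q
  have hpinr := hcfg.pin_r
  have hK5v : K5Graph.verts = Finset.range 5 := rfl
  have hip5 : ip < 5 := Finset.mem_range.mp hip
  have hiq5 : iq < 5 := Finset.mem_range.mp hiq
  have hir5 : ir < 5 := Finset.mem_range.mp hir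
  have tnotin : ∀ i ∈ Finset.range 5, t ∉ B i := fun i hi hti => ht (by
    have := (hB1 i hi).2.1 (Finset.mem_coe.mpr hti)
    exact_mod_cast this)
  have Htp' : H.Adj t p' := (hadjH _ _).mpr (Or.inr (Or.inl ⟨rfl, by simp⟩))
  have Htq' : H.Adj t q' := (hadjH _ _).mpr (Or.inr (Or.inl ⟨rfl, by simp⟩))
  have Htr' : H.Adj t r' := (hadjH _ _).mpr (Or.inr (Or.inl ⟨rfl, by simp⟩))
  have HGadj : ∀ a b, G.Adj a b → ¬(a = p ∨ a = q ∨ a = r) → ¬(b = p ∨ b = q ∨ b = r) →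
      H.Adj a b := by
    intro a b hab ha hb
    exact (hadjH _ _).mpr (Or.inl ⟨hab, by simpa [Set.mem_insert_iff] using ha,
      by simpa [Set.mem_insert_iff] using hb⟩)
  have hmemHverts : ∀ x, x ∈ G.verts → ¬(x = p ∨ x = q ∨ x = r) → x ∈ H.verts := by
    intro x hx hnx
    rw [hverts]
    simp only [Finset.mem_union, Finset.mem_sdiff, Finset.mem_insert, Finset.mem_singleton]
    exact Or.inl ⟨hx, hnx⟩
  have htH : t ∈ H.verts := by rw [hverts]; simp
  have hup : ∀ i ∈ Finset.range 5, p ∈ B i → i = ip :=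
    fun i hi h => uniq_mem K5Graph B hB2 p i ip hi hip h hp
  have huq : ∀ i ∈ Finset.range 5, q ∈ B i → i = iq :=
    fun i hi h => uniq_mem K5Graph B hB2 q i iq hi hiq h hq
  have hur : ∀ i ∈ Finset.range 5, r ∈ B i → i = ir :=
    fun i hi h => uniq_mem K5Graph B hB2 r i ir hi hir h hr
  -- primes inside
  have hprime : ∀ (il l l2 l3 pr e1 e2 : ℕ), il ∈ Finset.range 5 → l ∈ B il →
      (∀ x, G.Adj l x → x = l2 ∨ x = l3 ∨ x = pr) →
      (∀ i ∈ Finset.range 5, l2 ∈ B i → i = e1 ∨ i = e2) →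
      (∀ i ∈ Finset.range 5, l3 ∈ B i → i = e1 ∨ i = e2) →
      l2 ∉ B il → l3 ∉ B il → pr ∈ B il := by
    intro il l l2 l3 pr e1 e2 hil hl hpinl hul2 hul3 hnl2 hnl3
    obtain ⟨T0, hT0c, hT0i, hT0a⟩ := K5_nbrs il (Finset.mem_range.mp hil)
    apply lone_prime G K5Graph B hB1 hB2 hB3 il l l2 l3 pr hil hl
    · refine ⟨(T0.erase e1).erase e2, ?_, ?_, ?_, ?_⟩
      · have h1 := erase_card_ge T0 e1
        have h2 := erase_card_ge (T0.erase e1) e2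
        omega
      · intro j hj
        exact hT0a j (Finset.mem_of_mem_erase (Finset.mem_of_mem_erase hj))
      · intro j hj hmem
        have hj5 := (K5Graph.support _ _
          (hT0a j (Finset.mem_of_mem_erase (Finset.mem_of_mem_erase hj)))).2
        rcases hul2 j hj5 hmem with rfl | rfl
        · exact (Finset.ne_of_mem_erase (Finset.mem_of_mem_erase hj)) rfl
        · exact (Finset.ne_of_mem_erase hj) rfl
      · intro j hj hmem
        have hj5 := (K5Graph.support _ _
          (hT0a j (Finset.mem_of_mem_erase (Finset.mem_of_mem_erase hj)))).2
        rcases hul3 j hj5 hmem with rfl | rfl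
        · exact (Finset.ne_of_mem_erase (Finset.mem_of_mem_erase hj)) rfl
        · exact (Finset.ne_of_mem_erase hj) rfl
    · exact hpinl
    · exact hnl2
    · exact hnl3
  have hqnotip : q ∉ B ip := fun h => hipq (huq ip hip h)
  have hrnotip : r ∉ B ip := fun h => hipr (hur ip hip h)
  have hpnotiq : p ∉ B iq := fun h => hipq.symm (hup iq hiq h)
  have hrnotiq : r ∉ B iq := fun h => hiqr (hur iq hiq h)
  have hpnotir : p ∉ B ir := fun h => hipr.symm (hup ir hir h)
  have hqnotir : q ∉ B ir := fun h => hiqr.symm (huq ir hir h)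
  have hp'B : p' ∈ B ip := hprime ip p q r p' iq ir hip hp hpinp
    (fun i hi h => Or.inl (huq i hi h)) (fun i hi h => Or.inr (hur i hi h)) hqnotip hrnotip
  have hq'B : q' ∈ B iq := hprime iq q p r q' ip ir hiq hq hpinq
    (fun i hi h => Or.inl (hup i hi h)) (fun i hi h => Or.inr (hur i hi h)) hpnotiq hrnotiq
  have hr'B : r' ∈ B ir := hprime ir r p q r' ip iq hir hr hpinr
    (fun i hi h => Or.inl (hup i hi h)) (fun i hi h => Or.inr (huq i hi h)) hpnotir hqnotir
  -- the two remaining indices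
  have hsub3 : ({ip, iq, ir} : Finset ℕ) ⊆ Finset.range 5 := by
    intro x hx
    simp only [Finset.mem_insert, Finset.mem_singleton] at hx
    rcases hx with rfl | rfl | rfl <;> assumption
  have hcard3 : ({ip, iq, ir} : Finset ℕ).card = 3 := by
    rw [Finset.card_insert_of_notMem (by simp [hipq, hipr]),
      Finset.card_insert_of_notMem (by simp [hiqr]), Finset.card_singleton]
  have hsd2 : ((Finset.range 5) \ ({ip, iq, ir} : Finset ℕ)).card = 2 := by
    rw [Finset.card_sdiff_of_subset hsub3, hcard3, Finset.card_range]
  obtain ⟨j1, hj1m, j2, hj2m, hj12⟩ := Finset.one_lt_card.mp (by omega :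
    1 < ((Finset.range 5) \ ({ip, iq, ir} : Finset ℕ)).card)
  obtain ⟨hj1r5, hj1n⟩ := Finset.mem_sdiff.mp hj1m
  obtain ⟨hj2r5, hj2n⟩ := Finset.mem_sdiff.mp hj2m
  simp only [Finset.mem_insert, Finset.mem_singleton, not_or] at hj1n hj2n
  obtain ⟨hj1ip, hj1iq, hj1ir⟩ := hj1n
  obtain ⟨hj2ip, hj2iq, hj2ir⟩ := hj2n
  -- cleanliness
  have hcleanj : ∀ j ∈ Finset.range 5, j ≠ ip → j ≠ iq → j ≠ ir →
      ∀ x ∈ B j, ¬(x = p ∨ x = q ∨ x = r) := by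
    intro j hj h1 h2 h3 x hx hlx
    rcases hlx with rfl | rfl | rfl
    · exact h1 (hup j hj hx)
    · exact h2 (huq j hj hx)
    · exact h3 (hur j hj hx)
  have hcleanj1 := hcleanj j1 hj1r5 hj1ip hj1iq hj1ir
  have hcleanj2 := hcleanj j2 hj2r5 hj2ip hj2iq hj2ir
  have hothers_ip : ∀ x ∈ B ip, x ≠ p → ¬(x = p ∨ x = q ∨ x = r) := by
    intro x hx hxp hlx
    rcases hlx with rfl | rfl | rfl
    · exact hxp rfl
    · exact hqnotip hx
    · exact hrnotip hx
  have hothers_iq : ∀ x ∈ B iq, x ≠ q → ¬(x = p ∨ x = q ∨ x = r) := by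
    intro x hx hxq hlx
    rcases hlx with rfl | rfl | rfl
    · exact hpnotiq hx
    · exact hxq rfl
    · exact hrnotiq hx
  have hothers_ir : ∀ x ∈ B ir, x ≠ r → ¬(x = p ∨ x = q ∨ x = r) := by
    intro x hx hxr hlx
    rcases hlx with rfl | rfl | rfl
    · exact hpnotir hx
    · exact hqnotir hx
    · exact hxr rfl
  have hpinP : ∀ j ∈ Finset.range 5, j ≠ ip → j ≠ iq → j ≠ ir →
      ∀ x, G.Adj p x → x ∉ B j := by
    intro j hj h1 h2 h3 x hx hmem
    rcases hpinp x hx with h | h | h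
    · exact h2 (huq j hj (h ▸ hmem))
    · exact h3 (hur j hj (h ▸ hmem))
    · exact h1 (uniq_mem K5Graph B hB2 p' j ip hj hip (h ▸ hmem) hp'B)
  have hpinQ : ∀ j ∈ Finset.range 5, j ≠ ip → j ≠ iq → j ≠ ir →
      ∀ x, G.Adj q x → x ∉ B j := by
    intro j hj h1 h2 h3 x hx hmem
    rcases hpinq x hx with h | h | h
    · exact h1 (hup j hj (h ▸ hmem))
    · exact h3 (hur j hj (h ▸ hmem))
    · exact h2 (uniq_mem K5Graph B hB2 q' j iq hj hiq (h ▸ hmem) hq'B)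
  have hpinR : ∀ j ∈ Finset.range 5, j ≠ ip → j ≠ iq → j ≠ ir →
      ∀ x, G.Adj r x → x ∉ B j := by
    intro j hj h1 h2 h3 x hx hmem
    rcases hpinr x hx with h | h | h
    · exact h1 (hup j hj (h ▸ hmem))
    · exact h2 (huq j hj (h ▸ hmem))
    · exact h3 (uniq_mem K5Graph B hB2 r' j ir hj hir (h ▸ hmem) hr'B)
  -- connectivity helpers
  have connClean : ∀ j ∈ Finset.range 5, (∀ x ∈ B j, ¬(x = p ∨ x = q ∨ x = r)) →
      H.ConnectedOn ↑(B j) := by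
    intro j hj hcl
    apply connMap G H ↑(B j) ↑(B j) id (hB1 j hj).2.2 (fun a ha => ha)
    · intro a b hab haB hbB
      exact Or.inr (HGadj a b hab (hcl a (Finset.mem_coe.mp haB))
        (hcl b (Finset.mem_coe.mp hbB)))
    · exact fun x hx => ⟨x, hx, rfl⟩
  have connDel : ∀ (il l l2 l3 pr : ℕ), il ∈ Finset.range 5 → l ∈ B il → pr ∈ B il →
      l2 ∉ B il → l3 ∉ B il → (∀ x, G.Adj l x → x = l2 ∨ x = l3 ∨ x = pr) →
      ¬(pr = p ∨ pr = q ∨ pr = r) → pr ≠ l →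
      (∀ x ∈ B il, x ≠ l → ¬(x = p ∨ x = q ∨ x = r)) →
      H.ConnectedOn ↑(B il \ {l}) := by
    intro il l l2 l3 pr hil hl hprB hnl2 hnl3 hpinl hprnl hprl hoth
    apply connMap G H ↑(B il) ↑(B il \ {l}) (fun a => if a = l then pr else a) (hB1 il hil).2.2
    · intro a ha
      by_cases hal : a = l
      · rw [if_pos hal]
        exact Finset.mem_coe.mpr (Finset.mem_sdiff.mpr ⟨hprB, by simp [hprl]⟩)
      · rw [if_neg hal]
        exact Finset.mem_coe.mpr (Finset.mem_sdiff.mpr ⟨Finset.mem_coe.mp ha, by simp [hal]⟩)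
    · intro a b hab haB hbB
      by_cases hal : a = l <;> by_cases hbl : b = l
      · exact absurd (by rwa [hal, hbl] at hab) (G.loopless l)
      · have hab' : G.Adj l b := by rwa [hal] at hab
        rcases hpinl b hab' with rfl | rfl | rfl
        · exact absurd (Finset.mem_coe.mp hbB) hnl2
        · exact absurd (Finset.mem_coe.mp hbB) hnl3
        · exact Or.inl (by simp [hal, hbl])
      · have hab' : G.Adj l a := G.symm _ _ (by rwa [hbl] at hab)
        rcases hpinl a hab' with rfl | rfl | rfl
        · exact absurd (Finset.mem_coe.mp haB) hnl2
        · exact absurd (Finset.mem_coe.mp haB) hnl3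
        · exact Or.inl (by simp [hal, hbl])
      · rw [if_neg hal, if_neg hbl]
        exact Or.inr (HGadj a b hab (hoth a (Finset.mem_coe.mp haB) hal)
          (hoth b (Finset.mem_coe.mp hbB) hbl))
    · intro x hx
      obtain ⟨hxB, hxl⟩ := Finset.mem_sdiff.mp (Finset.mem_coe.mp hx)
      have hxl' : x ≠ l := by simpa using hxl
      exact ⟨x, Finset.mem_coe.mpr hxB, by rw [if_neg hxl']⟩
  -- the new branch sets
  set C : ℕ → Finset ℕ := fun i => if i = 0 then B j1 else if i = 1 then B j2
    else if i = 2 then {t} else if i = 3 then B ip \ {p} else if i = 4 then B iq \ {q}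
    else B ir \ {r} with hCdef
  have eC0 : C 0 = B j1 := by simp [hCdef]
  have eC1 : C 1 = B j2 := by simp [hCdef]
  have eC2 : C 2 = {t} := by simp [hCdef]
  have eC3 : C 3 = B ip \ {p} := by simp [hCdef]
  have eC4 : C 4 = B iq \ {q} := by simp [hCdef]
  have eC5 : C 5 = B ir \ {r} := by simp [hCdef]
  have hnp'' : ¬(p' = p ∨ p' = q ∨ p' = r) := by
    push_neg; exact ⟨hnp'.1, hnp'.2.1, hnp'.2.2⟩
  have hnq'' : ¬(q' = p ∨ q' = q ∨ q' = r) := by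
    push_neg; exact ⟨hnq'.1, hnq'.2.1, hnq'.2.2⟩
  have hnr'' : ¬(r' = p ∨ r' = q ∨ r' = r) := by
    push_neg; exact ⟨hnr'.1, hnr'.2.1, hnr'.2.2⟩
  have subVerts : ∀ (D : Finset ℕ), (∀ x ∈ D, x ∈ G.verts ∧ ¬(x = p ∨ x = q ∨ x = r)) →
      ↑D ⊆ (↑H.verts : Set ℕ) := by
    intro D hD x hx
    have := hD x (Finset.mem_coe.mp hx)
    exact Finset.mem_coe.mpr (hmemHverts x this.1 this.2)
  have hginB : ∀ j ∈ Finset.range 5, ∀ x ∈ B j, x ∈ G.verts := by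
    intro j hj x hx
    have := (hB1 j hj).2.1 (Finset.mem_coe.mpr hx)
    exact_mod_cast this
  have connT : H.ConnectedOn ↑({t} : Finset ℕ) := by
    intro u hu v hv
    simp only [Finset.coe_singleton, Set.mem_singleton_iff] at hu hv
    rw [hu, hv]
    exact Relation.ReflTransGen.refl
  refine ⟨C, ?_, ?_, ?_⟩
  · intro v hv
    have hv6 : v < 6 := Finset.mem_range.mp hv
    interval_cases v
    · rw [eC0]
      exact ⟨(hB1 j1 hj1r5).1,
        subVerts _ (fun x hx => ⟨hginB j1 hj1r5 x hx, hcleanj1 x hx⟩),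
        connClean j1 hj1r5 hcleanj1⟩
    · rw [eC1]
      exact ⟨(hB1 j2 hj2r5).1,
        subVerts _ (fun x hx => ⟨hginB j2 hj2r5 x hx, hcleanj2 x hx⟩),
        connClean j2 hj2r5 hcleanj2⟩
    · rw [eC2]
      refine ⟨⟨t, Finset.mem_singleton_self t⟩, ?_, connT⟩
      intro x hx
      simp only [Finset.coe_singleton, Set.mem_singleton_iff] at hx
      rw [hx]
      exact Finset.mem_coe.mpr htH
    · rw [eC3]
      refine ⟨⟨p', Finset.mem_sdiff.mpr ⟨hp'B, by simp [hnp'.1]⟩⟩, ?_, ?_⟩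
      · apply subVerts
        intro x hx
        obtain ⟨hxB, hxp⟩ := Finset.mem_sdiff.mp hx
        exact ⟨hginB ip hip x hxB, hothers_ip x hxB (by simpa using hxp)⟩
      · exact connDel ip p q r p' hip hp hp'B hqnotip hrnotip hpinp hnp'' hnp'.1 hothers_ip
    · rw [eC4]
      refine ⟨⟨q', Finset.mem_sdiff.mpr ⟨hq'B, by simp [hnq'.2.1]⟩⟩, ?_, ?_⟩
      · apply subVerts
        intro x hx
        obtain ⟨hxB, hxq⟩ := Finset.mem_sdiff.mp hx
        exact ⟨hginB iq hiq x hxB, hothers_iq x hxB (by simpa using hxq)⟩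
      · exact connDel iq q p r q' hiq hq hq'B hpnotiq hrnotiq hpinq hnq'' hnq'.2.1 hothers_iq
    · rw [eC5]
      refine ⟨⟨r', Finset.mem_sdiff.mpr ⟨hr'B, by simp [hnr'.2.2]⟩⟩, ?_, ?_⟩
      · apply subVerts
        intro x hx
        obtain ⟨hxB, hxr⟩ := Finset.mem_sdiff.mp hx
        exact ⟨hginB ir hir x hxB, hothers_ir x hxB (by simpa using hxr)⟩
      · exact connDel ir r p q r' hir hr hr'B hpnotir hqnotir hpinr hnr'' hnr'.2.2 hothers_ir
  · -- disjointness
    have keyP : ∀ a b : ℕ, a ∈ Finset.range 5 → b ∈ Finset.range 5 → a ≠ b →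
        Disjoint (B a) (B b) := fun a b ha hb hne => hB2 a ha b hb hne
    have keyL : ∀ (a b : ℕ) (Y : Finset ℕ), a ∈ Finset.range 5 → b ∈ Finset.range 5 →
        a ≠ b → Disjoint (B a) (B b \ Y) := fun a b Y ha hb hne =>
      Finset.disjoint_of_subset_right (Finset.sdiff_subset) (hB2 a ha b hb hne)
    have keyR : ∀ (a b : ℕ) (X : Finset ℕ), a ∈ Finset.range 5 → b ∈ Finset.range 5 →
        a ≠ b → Disjoint (B a \ X) (B b) := fun a b X ha hb hne =>
      Finset.disjoint_of_subset_left (Finset.sdiff_subset) (hB2 a ha b hb hne)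
    have key2 : ∀ (a b : ℕ) (X Y : Finset ℕ), a ∈ Finset.range 5 → b ∈ Finset.range 5 →
        a ≠ b → Disjoint (B a \ X) (B b \ Y) := fun a b X Y ha hb hne =>
      Finset.disjoint_of_subset_left (Finset.sdiff_subset)
        (Finset.disjoint_of_subset_right (Finset.sdiff_subset) (hB2 a ha b hb hne))
    have keyT1 : ∀ (a : ℕ), a ∈ Finset.range 5 → Disjoint ({t} : Finset ℕ) (B a) := by
      intro a ha
      rw [Finset.disjoint_left]
      intro x hx hx2
      rw [Finset.mem_singleton] at hx
      exact tnotin a ha (hx ▸ hx2)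
    have keyT2 : ∀ (a : ℕ) (X : Finset ℕ), a ∈ Finset.range 5 →
        Disjoint ({t} : Finset ℕ) (B a \ X) := fun a X ha =>
      Finset.disjoint_of_subset_right (Finset.sdiff_subset) (keyT1 a ha)
    intro u hu v hv huv
    have hu6 : u < 6 := Finset.mem_range.mp hu
    have hv6 : v < 6 := Finset.mem_range.mp hv
    interval_cases u <;> interval_cases v <;>
      simp only [eC0, eC1, eC2, eC3, eC4, eC5] <;>
      first
      | exact absurd rfl huv
      | exact keyP _ _ (by assumption) (by assumption) (by assumption)
      | exact keyP _ _ (by assumption) (by assumption) (Ne.symm (by assumption))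
      | exact keyL _ _ _ (by assumption) (by assumption) (by assumption)
      | exact keyL _ _ _ (by assumption) (by assumption) (Ne.symm (by assumption))
      | exact keyR _ _ _ (by assumption) (by assumption) (by assumption)
      | exact keyR _ _ _ (by assumption) (by assumption) (Ne.symm (by assumption))
      | exact key2 _ _ _ _ (by assumption) (by assumption) (by assumption)
      | exact key2 _ _ _ _ (by assumption) (by assumption) (Ne.symm (by assumption))
      | exact keyT2 _ _ (by assumption)
      | exact (keyT2 _ _ (by assumption)).symm
      | exact keyT1 _ (by assumption)
      | exact (keyT1 _ (by assumption)).symm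
  · -- adjacency
    have hedge : ∀ (j il l : ℕ), j ∈ Finset.range 5 → il ∈ Finset.range 5 → j ≠ il →
        (∀ x ∈ B j, ¬(x = p ∨ x = q ∨ x = r)) → l ∈ B il →
        (∀ x ∈ B il, x ≠ l → ¬(x = p ∨ x = q ∨ x = r)) →
        (∀ x, G.Adj l x → x ∉ B j) →
        ∃ a ∈ B j, ∃ b ∈ B il \ {l}, H.Adj a b := by
      intro j il l hj hil hne hclean hl hoth hpinl
      obtain ⟨a, haB, b, hbB, hab⟩ := hB3 j il
        ⟨hne, Finset.mem_range.mp hj, Finset.mem_range.mp hil⟩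
      have hbl : b ≠ l := by
        rintro rfl
        exact hpinl a (G.symm _ _ hab) haB
      exact ⟨a, haB, b, Finset.mem_sdiff.mpr ⟨hbB, by simp [hbl]⟩,
        HGadj a b hab (hclean a haB) (hoth b hbB hbl)⟩
    have hflip : ∀ u' v', u' < 3 → 3 ≤ v' → v' < 6 → ∃ a ∈ C u', ∃ b ∈ C v', H.Adj a b := by
      intro u' v' h1 h2 h3
      interval_cases u' <;> interval_cases v'
      · rw [eC0, eC3]
        exact hedge j1 ip p hj1r5 hip hj1ip hcleanj1 hp hothers_ip
          (hpinP j1 hj1r5 hj1ip hj1iq hj1ir)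
      · rw [eC0, eC4]
        exact hedge j1 iq q hj1r5 hiq hj1iq hcleanj1 hq hothers_iq
          (hpinQ j1 hj1r5 hj1ip hj1iq hj1ir)
      · rw [eC0, eC5]
        exact hedge j1 ir r hj1r5 hir hj1ir hcleanj1 hr hothers_ir
          (hpinR j1 hj1r5 hj1ip hj1iq hj1ir)
      · rw [eC1, eC3]
        exact hedge j2 ip p hj2r5 hip hj2ip hcleanj2 hp hothers_ip
          (hpinP j2 hj2r5 hj2ip hj2iq hj2ir)
      · rw [eC1, eC4]
        exact hedge j2 iq q hj2r5 hiq hj2iq hcleanj2 hq hothers_iq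
          (hpinQ j2 hj2r5 hj2ip hj2iq hj2ir)
      · rw [eC1, eC5]
        exact hedge j2 ir r hj2r5 hir hj2ir hcleanj2 hr hothers_ir
          (hpinR j2 hj2r5 hj2ip hj2iq hj2ir)
      · rw [eC2, eC3]
        exact ⟨t, Finset.mem_singleton_self t, p',
          Finset.mem_sdiff.mpr ⟨hp'B, by simp [hnp'.1]⟩, Htp'⟩
      · rw [eC2, eC4]
        exact ⟨t, Finset.mem_singleton_self t, q',
          Finset.mem_sdiff.mpr ⟨hq'B, by simp [hnq'.2.1]⟩, Htq'⟩
      · rw [eC2, eC5]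
        exact ⟨t, Finset.mem_singleton_self t, r',
          Finset.mem_sdiff.mpr ⟨hr'B, by simp [hnr'.2.2]⟩, Htr'⟩
    intro u v huv
    rcases huv with ⟨h1, h2, h3⟩ | ⟨h1, h2, h3⟩
    · exact hflip u v h1 h2 h3
    · obtain ⟨a, ha, b, hb, hab⟩ := hflip v u h1 h2 h3
      exact ⟨b, hb, a, ha, H.symm _ _ hab⟩

end FinGraph

namespace FinGraph

lemma d3a_cases (G H K : FinGraph) (p q r p' q' r' t : ℕ)
    (hcfg : G.D3aConfig p q r p' q' r') (ht : t ∉ G.verts)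
    (hverts : H.verts = (G.verts \ {p, q, r}) ∪ {t})
    (hadjH : ∀ a b, H.Adj a b ↔
      (G.Adj a b ∧ a ∉ ({p, q, r} : Set ℕ) ∧ b ∉ ({p, q, r} : Set ℕ)) ∨
      (a = t ∧ b ∈ ({p', q', r'} : Set ℕ)) ∨
      (b = t ∧ a ∈ ({p', q', r'} : Set ℕ)))
    (B : ℕ → Finset ℕ)
    (hB1 : ∀ v ∈ K.verts, (B v).Nonempty ∧ ↑(B v) ⊆ (↑G.verts : Set ℕ) ∧ G.ConnectedOn ↑(B v))
    (hB2 : ∀ u ∈ K.verts, ∀ v ∈ K.verts, u ≠ v → Disjoint (B u) (B v))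
    (hB3 : ∀ u v, K.Adj u v → ∃ a ∈ B u, ∃ b ∈ B v, G.Adj a b)
    (hnb : ∀ i ∈ K.verts, ∃ T : Finset ℕ, 3 ≤ T.card ∧ i ∉ T ∧ ∀ j ∈ T, K.Adj i j)
    (C : Prop)
    (hout : H.HasMinor K → C)
    (hdist : ∀ ip iq ir, ip ∈ K.verts → iq ∈ K.verts → ir ∈ K.verts →
      ip ≠ iq → ip ≠ ir → iq ≠ ir → p ∈ B ip → q ∈ B iq → r ∈ B ir →
      K.Adj ip iq → K.Adj ip ir → K.Adj iq ir → C) :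
    C := by
  classical
  -- permuted data : swap12 (q,p,r), swap23 (p,r,q), rot (q,r,p), rot2 (r,p,q)
  have eF12 : ({q, p, r} : Finset ℕ) = {p, q, r} := by ext x; simp; tauto
  have eS12 : ({q, p, r} : Set ℕ) = {p, q, r} := by ext x; simp; tauto
  have eS12' : ({q', p', r'} : Set ℕ) = {p', q', r'} := by ext x; simp; tauto
  have hverts12 : H.verts = (G.verts \ {q, p, r}) ∪ {t} := by rw [eF12]; exact hverts
  have hadjH12 : ∀ a b, H.Adj a b ↔
      (G.Adj a b ∧ a ∉ ({q, p, r} : Set ℕ) ∧ b ∉ ({q, p, r} : Set ℕ)) ∨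
      (a = t ∧ b ∈ ({q', p', r'} : Set ℕ)) ∨
      (b = t ∧ a ∈ ({q', p', r'} : Set ℕ)) := by
    intro a b; rw [eS12, eS12']; exact hadjH a b
  have eF23 : ({p, r, q} : Finset ℕ) = {p, q, r} := by ext x; simp; tauto
  have eS23 : ({p, r, q} : Set ℕ) = {p, q, r} := by ext x; simp; tauto
  have eS23' : ({p', r', q'} : Set ℕ) = {p', q', r'} := by ext x; simp; tauto
  have hverts23 : H.verts = (G.verts \ {p, r, q}) ∪ {t} := by rw [eF23]; exact hverts
  have hadjH23 : ∀ a b, H.Adj a b ↔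
      (G.Adj a b ∧ a ∉ ({p, r, q} : Set ℕ) ∧ b ∉ ({p, r, q} : Set ℕ)) ∨
      (a = t ∧ b ∈ ({p', r', q'} : Set ℕ)) ∨
      (b = t ∧ a ∈ ({p', r', q'} : Set ℕ)) := by
    intro a b; rw [eS23, eS23']; exact hadjH a b
  have eFrot : ({q, r, p} : Finset ℕ) = {p, q, r} := by ext x; simp; tauto
  have eSrot : ({q, r, p} : Set ℕ) = {p, q, r} := by ext x; simp; tauto
  have eSrot' : ({q', r', p'} : Set ℕ) = {p', q', r'} := by ext x; simp; tauto
  have hvertsRot : H.verts = (G.verts \ {q, r, p}) ∪ {t} := by rw [eFrot]; exact hverts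
  have hadjHRot : ∀ a b, H.Adj a b ↔
      (G.Adj a b ∧ a ∉ ({q, r, p} : Set ℕ) ∧ b ∉ ({q, r, p} : Set ℕ)) ∨
      (a = t ∧ b ∈ ({q', r', p'} : Set ℕ)) ∨
      (b = t ∧ a ∈ ({q', r', p'} : Set ℕ)) := by
    intro a b; rw [eSrot, eSrot']; exact hadjH a b
  have eFrot2 : ({r, p, q} : Finset ℕ) = {p, q, r} := by ext x; simp; tauto
  have eSrot2 : ({r, p, q} : Set ℕ) = {p, q, r} := by ext x; simp; tauto
  have eSrot2' : ({r', p', q'} : Set ℕ) = {p', q', r'} := by ext x; simp; tauto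
  have hvertsRot2 : H.verts = (G.verts \ {r, p, q}) ∪ {t} := by rw [eFrot2]; exact hverts
  have hadjHRot2 : ∀ a b, H.Adj a b ↔
      (G.Adj a b ∧ a ∉ ({r, p, q} : Set ℕ) ∧ b ∉ ({r, p, q} : Set ℕ)) ∨
      (a = t ∧ b ∈ ({r', p', q'} : Set ℕ)) ∨
      (b = t ∧ a ∈ ({r', p', q'} : Set ℕ)) := by
    intro a b; rw [eSrot2, eSrot2']; exact hadjH a b
  by_cases hP : ∃ i ∈ K.verts, p ∈ B i
  · obtain ⟨ip, hip, hp⟩ := hP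
    by_cases hQ : ∃ i ∈ K.verts, q ∈ B i
    · obtain ⟨iq, hiq, hq⟩ := hQ
      by_cases hR : ∃ i ∈ K.verts, r ∈ B i
      · obtain ⟨ir, hir, hr⟩ := hR
        by_cases e1 : ip = iq
        · by_cases e2 : ip = ir
          · -- all in one
            apply hout
            apply subL_in_one hcfg ht hverts hadjH hB1 hB2 hB3 ip hip hp
            · exact fun i hi h => uniq_mem K B hB2 q i ip hi hip h (e1 ▸ hq)
            · exact fun i hi h => uniq_mem K B hB2 r i ip hi hip h (e2 ▸ hr)
          · -- p,q in ip ; r in ir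
            apply hout
            exact subL_pair_single hcfg ht hverts hadjH hB1 hB2 hB3 hnb ip ir hip hir e2
              hp (e1 ▸ hq) hr
        · by_cases e2 : ip = ir
          · -- p,r in ip ; q alone : letters (p,r,q)
            apply hout
            exact subL_pair_single hcfg.swap23 ht hverts23 hadjH23 hB1 hB2 hB3 hnb ip iq
              hip hiq e1 hp (e2 ▸ hr) hq
          · by_cases e3 : iq = ir
            · -- q,r in iq ; p alone : letters (q,r,p)
              apply hout
              exact subL_pair_single hcfg.rot ht hvertsRot hadjHRot hB1 hB2 hB3 hnb iq ip
                hiq hip (fun e => e1 e.symm) hq (e3 ▸ hr) hp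
            · -- all distinct
              by_cases hA1 : K.Adj ip iq
              · by_cases hA2 : K.Adj ip ir
                · by_cases hA3 : K.Adj iq ir
                  · exact hdist ip iq ir hip hiq hir e1 e2 e3 hp hq hr hA1 hA2 hA3
                  · apply hout
                    exact subL_dist_lone hcfg.rot ht hvertsRot hadjHRot hB1 hB2 hB3 hnb
                      iq ir ip hiq hir hip e3 (fun e => e1 e.symm) (fun e => e2 e.symm)
                      hq hr hp hA3
                · apply hout
                  exact subL_dist_lone hcfg.swap23 ht hverts23 hadjH23 hB1 hB2 hB3 hnb
                    ip ir iq hip hir hiq e2 e1 (fun e => e3 e.symm) hp hr hq hA2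
              · apply hout
                exact subL_dist_lone hcfg ht hverts hadjH hB1 hB2 hB3 hnb
                  ip iq ir hip hiq hir e1 e2 e3 hp hq hr hA1
      · -- r unplaced
        have hnr : ∀ i ∈ K.verts, r ∉ B i := fun i hi h => hR ⟨i, hi, h⟩
        by_cases e1 : ip = iq
        · apply hout
          apply subL_in_one hcfg ht hverts hadjH hB1 hB2 hB3 ip hip hp
          · exact fun i hi h => uniq_mem K B hB2 q i ip hi hip h (e1 ▸ hq)
          · exact fun i hi h => absurd h (hnr i hi)
        · apply hout
          exact subL_two hcfg ht hverts hadjH hB1 hB2 hB3 hnb ip iq hip hiq e1 hp hq hnr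
    · -- q unplaced
      have hnq : ∀ i ∈ K.verts, q ∉ B i := fun i hi h => hQ ⟨i, hi, h⟩
      by_cases hR : ∃ i ∈ K.verts, r ∈ B i
      · obtain ⟨ir, hir, hr⟩ := hR
        by_cases e1 : ip = ir
        · -- p, r in ip : letters (p,r,q)
          apply hout
          apply subL_in_one hcfg.swap23 ht hverts23 hadjH23 hB1 hB2 hB3 ip hip hp
          · exact fun i hi h => uniq_mem K B hB2 r i ip hi hip h (e1 ▸ hr)
          · exact fun i hi h => absurd h (hnq i hi)
        · apply hout
          exact subL_two hcfg.swap23 ht hverts23 hadjH23 hB1 hB2 hB3 hnb ip ir hip hir e1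
            hp hr hnq
      · -- only p placed
        have hnr : ∀ i ∈ K.verts, r ∉ B i := fun i hi h => hR ⟨i, hi, h⟩
        apply hout
        apply subL_in_one hcfg ht hverts hadjH hB1 hB2 hB3 ip hip hp
        · exact fun i hi h => absurd h (hnq i hi)
        · exact fun i hi h => absurd h (hnr i hi)
  · -- p unplaced
    have hnp : ∀ i ∈ K.verts, p ∉ B i := fun i hi h => hP ⟨i, hi, h⟩
    by_cases hQ : ∃ i ∈ K.verts, q ∈ B i
    · obtain ⟨iq, hiq, hq⟩ := hQ
      by_cases hR : ∃ i ∈ K.verts, r ∈ B i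
      · obtain ⟨ir, hir, hr⟩ := hR
        by_cases e1 : iq = ir
        · -- q, r in iq : letters (q,r,p)
          apply hout
          apply subL_in_one hcfg.rot ht hvertsRot hadjHRot hB1 hB2 hB3 iq hiq hq
          · exact fun i hi h => uniq_mem K B hB2 r i iq hi hiq h (e1 ▸ hr)
          · exact fun i hi h => absurd h (hnp i hi)
        · apply hout
          exact subL_two hcfg.rot ht hvertsRot hadjHRot hB1 hB2 hB3 hnb iq ir hiq hir e1
            hq hr hnp
      · -- only q placed : letters (q,p,r)
        have hnr : ∀ i ∈ K.verts, r ∉ B i := fun i hi h => hR ⟨i, hi, h⟩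
        apply hout
        apply subL_in_one hcfg.swap12 ht hverts12 hadjH12 hB1 hB2 hB3 iq hiq hq
        · exact fun i hi h => absurd h (hnp i hi)
        · exact fun i hi h => absurd h (hnr i hi)
    · have hnq : ∀ i ∈ K.verts, q ∉ B i := fun i hi h => hQ ⟨i, hi, h⟩
      by_cases hR : ∃ i ∈ K.verts, r ∈ B i
      · -- only r placed : letters (r,p,q)
        obtain ⟨ir, hir, hr⟩ := hR
        apply hout
        apply subL_in_one hcfg.rot.rot ht hvertsRot2 hadjHRot2 hB1 hB2 hB3 ir hir hr
        · exact fun i hi h => absurd h (hnp i hi)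
        · exact fun i hi h => absurd h (hnq i hi)
      · have hnr : ∀ i ∈ K.verts, r ∉ B i := fun i hi h => hR ⟨i, hi, h⟩
        apply hout
        exact subL_none hcfg ht hverts hadjH hB1 hB2 hB3 hnp hnq hnr

lemma D3a.preserve_K5 {G H : FinGraph} (hd : G.D3a H) (hm : G.HasMinor K5Graph) :
    H.HasMinor K5Graph ∨ H.HasMinor K33Graph := by
  obtain ⟨p, q, r, p', q', r', t, hcfg, ht, hverts, hadjH⟩ := hd
  obtain ⟨B, hB1, hB2, hB3⟩ := hm
  apply d3a_cases G H K5Graph p q r p' q' r' t hcfg ht hverts hadjH B hB1 hB2 hB3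
  · intro i hi
    obtain ⟨T, hTc, hTi, hTa⟩ := K5_nbrs i (Finset.mem_range.mp hi)
    exact ⟨T, by omega, hTi, hTa⟩
  · exact Or.inl
  · intro ip iq ir hip hiq hir e1 e2 e3 hp hq hr _ _ _
    exact Or.inr (d3a_K5_dist G H p q r p' q' r' t hcfg ht hverts hadjH B hB1 hB2 hB3
      ip iq ir hip hiq hir e1 e2 e3 hp hq hr)

lemma D3a.preserve_K33 {G H : FinGraph} (hd : G.D3a H) (hm : G.HasMinor K33Graph) :
    H.HasMinor K33Graph := by
  obtain ⟨p, q, r, p', q', r', t, hcfg, ht, hverts, hadjH⟩ := hd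
  obtain ⟨B, hB1, hB2, hB3⟩ := hm
  apply d3a_cases G H K33Graph p q r p' q' r' t hcfg ht hverts hadjH B hB1 hB2 hB3
  · intro i hi
    obtain ⟨T, hTc, hTi, hTa⟩ := K33_nbrs i (Finset.mem_range.mp hi)
    exact ⟨T, by omega, hTi, hTa⟩
  · exact id
  · intro ip iq ir hip hiq hir _ _ _ _ _ _ hA1 hA2 hA3
    exfalso
    rcases hA1 with ⟨a1, a2, a3⟩ | ⟨a1, a2, a3⟩ <;>
      rcases hA2 with ⟨b1, b2, b3⟩ | ⟨b1, b2, b3⟩ <;>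
      rcases hA3 with ⟨c1, c2, c3⟩ | ⟨c1, c2, c3⟩ <;> omega

end FinGraph

namespace FinGraph

lemma d3b_transfer (G H K : FinGraph) (p q r s : ℕ)
    (hcfg : G.D3bConfig p q r s)
    (hverts : H.verts = G.verts \ {q})
    (hadjH : ∀ a b, H.Adj a b ↔
      (G.Adj a b ∧ a ≠ q ∧ b ≠ q) ∨ (a = p ∧ b = r) ∨ (a = r ∧ b = p))
    (B : ℕ → Finset ℕ)
    (hB1 : ∀ v ∈ K.verts, (B v).Nonempty ∧ ↑(B v) ⊆ (↑G.verts : Set ℕ) ∧ G.ConnectedOn ↑(B v))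
    (hB2 : ∀ u ∈ K.verts, ∀ v ∈ K.verts, u ≠ v → Disjoint (B u) (B v))
    (hB3 : ∀ u v, K.Adj u v → ∃ a ∈ B u, ∃ b ∈ B v, G.Adj a b)
    (hsing : ∀ i ∈ K.verts, q ∈ B i → B i ≠ {q}) :
    H.HasMinor K := by
  classical
  obtain ⟨dp, dq, dr, hpq, hqr, hnpr, hprne, hsp, hsq, hsr⟩ := hcfg
  have hpqne : p ≠ q := fun e => G.loopless q (e ▸ hpq)
  have hqrne : q ≠ r := fun e => G.loopless r (e ▸ hqr)
  have hsqne : s ≠ q := fun e => G.loopless q (e ▸ hsq)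
  have hspne : s ≠ p := fun e => G.loopless p (e ▸ hsp)
  have hsrne : s ≠ r := fun e => G.loopless r (e ▸ hsr)
  have hpinq : ∀ x, G.Adj q x → x = p ∨ x = r ∨ x = s :=
    degThreeNbrs G q p r s dq hprne (fun e => hspne e.symm) (fun e => hsrne e.symm)
      (G.symm _ _ hpq) hqr (G.symm _ _ hsq)
  have trio : ∀ x y, (x = p ∨ x = r ∨ x = s) → (y = p ∨ y = r ∨ y = s) → x ≠ y →
      H.Adj x y := by
    intro x y hx hy hxy
    rcases hx with rfl | rfl | rfl <;> rcases hy with rfl | rfl | rfl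
    · exact absurd rfl hxy
    · exact (hadjH _ _).mpr (Or.inr (Or.inl ⟨rfl, rfl⟩))
    · exact (hadjH _ _).mpr (Or.inl ⟨G.symm _ _ hsp, hpqne, hsqne⟩)
    · exact (hadjH _ _).mpr (Or.inr (Or.inr ⟨rfl, rfl⟩))
    · exact absurd rfl hxy
    · exact (hadjH _ _).mpr (Or.inl ⟨G.symm _ _ hsr, fun e => hqrne e.symm, hsqne⟩)
    · exact (hadjH _ _).mpr (Or.inl ⟨hsp, hsqne, hpqne⟩)
    · exact (hadjH _ _).mpr (Or.inl ⟨hsr, hsqne, fun e => hqrne e.symm⟩)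
    · exact absurd rfl hxy
  have HGadj : ∀ a b, G.Adj a b → a ≠ q → b ≠ q → H.Adj a b :=
    fun a b hab ha hb => (hadjH _ _).mpr (Or.inl ⟨hab, ha, hb⟩)
  have getn0 : ∀ i ∈ K.verts, q ∈ B i → ∃ n0, n0 ∈ B i ∧ G.Adj q n0 ∧
      (n0 = p ∨ n0 = r ∨ n0 = s) ∧ n0 ≠ q := by
    intro i hi hqB
    have hne := hsing i hi hqB
    have hex : ∃ x ∈ B i, x ≠ q := by
      by_contra h
      push_neg at h
      apply hne
      ext y
      simp only [Finset.mem_singleton]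
      exact ⟨fun hy => h y hy, fun hy => hy ▸ hqB⟩
    obtain ⟨x, hx, hxq⟩ := hex
    obtain ⟨y, hy, hady⟩ := firstNbr G ↑(B i) (hB1 i hi).2.2 q x
      (Finset.mem_coe.mpr hqB) (Finset.mem_coe.mpr hx) (fun e => hxq e.symm)
    exact ⟨y, Finset.mem_coe.mp hy, hady, hpinq y hady,
      fun e => G.loopless q (e ▸ hady)⟩
  have hqG : ∀ i ∈ K.verts, ∀ x ∈ B i, x ∈ G.verts := by
    intro i hi x hx
    have := (hB1 i hi).2.1 (Finset.mem_coe.mpr hx)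
    exact_mod_cast this
  refine ⟨fun i => B i \ {q}, ?_, ?_, ?_⟩
  · intro v hv
    refine ⟨?_, ?_, ?_⟩
    · by_cases hqB : q ∈ B v
      · obtain ⟨n0, hn0B, _, _, hn0q⟩ := getn0 v hv hqB
        exact ⟨n0, Finset.mem_sdiff.mpr ⟨hn0B, by simp [hn0q]⟩⟩
      · obtain ⟨x, hx⟩ := (hB1 v hv).1
        exact ⟨x, Finset.mem_sdiff.mpr ⟨hx, by
          simp only [Finset.mem_singleton]
          rintro rfl
          exact hqB hx⟩⟩
    · intro x hx
      obtain ⟨hxB, hxq⟩ := Finset.mem_sdiff.mp (Finset.mem_coe.mp hx)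
      rw [hverts]
      simp only [Finset.coe_sdiff, Set.mem_diff, Finset.coe_singleton,
        Set.mem_singleton_iff]
      exact ⟨Finset.mem_coe.mpr (hqG v hv x hxB), by simpa using hxq⟩
    · by_cases hqB : q ∈ B v
      · obtain ⟨n0, hn0B, hqn0, hn0prs, hn0q⟩ := getn0 v hv hqB
        apply connMap G H ↑(B v) ↑(B v \ ({q} : Finset ℕ)) (fun a => if a = q then n0 else a)
          (hB1 v hv).2.2
        · intro a ha
          by_cases haq : a = q
          · rw [if_pos haq]
            exact Finset.mem_coe.mpr (Finset.mem_sdiff.mpr ⟨hn0B, by simp [hn0q]⟩)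
          · rw [if_neg haq]
            exact Finset.mem_coe.mpr (Finset.mem_sdiff.mpr ⟨Finset.mem_coe.mp ha,
              by simp [haq]⟩)
        · intro a b hab haB hbB
          by_cases haq : a = q <;> by_cases hbq : b = q
          · exact absurd (by rwa [haq, hbq] at hab) (G.loopless q)
          · have hab' : G.Adj q b := by rwa [haq] at hab
            have hbprs := hpinq b hab'
            by_cases hn0b : n0 = b
            · exact Or.inl (by rw [if_pos haq, if_neg hbq, hn0b])
            · exact Or.inr (by rw [if_pos haq, if_neg hbq]; exact trio n0 b hn0prs hbprs hn0b)
          · have hab' : G.Adj q a := G.symm _ _ (by rwa [hbq] at hab)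
            have haprs := hpinq a hab'
            by_cases hn0a : a = n0
            · exact Or.inl (by rw [if_pos hbq, if_neg haq, hn0a])
            · exact Or.inr (by
                rw [if_pos hbq, if_neg haq]
                exact trio a n0 haprs hn0prs hn0a)
          · exact Or.inr (by rw [if_neg haq, if_neg hbq]; exact HGadj a b hab haq hbq)
        · intro x hx
          obtain ⟨hxB, hxq⟩ := Finset.mem_sdiff.mp (Finset.mem_coe.mp hx)
          have hxq' : x ≠ q := by simpa using hxq
          exact ⟨x, Finset.mem_coe.mpr hxB, by rw [if_neg hxq']⟩
      · apply connMap G H ↑(B v) ↑(B v \ ({q} : Finset ℕ)) id (hB1 v hv).2.2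
        · intro a ha
          exact Finset.mem_coe.mpr (Finset.mem_sdiff.mpr ⟨Finset.mem_coe.mp ha, by
            simp only [Finset.mem_singleton]
            rintro rfl
            exact hqB (Finset.mem_coe.mp ha)⟩)
        · intro a b hab haB hbB
          refine Or.inr (HGadj a b hab ?_ ?_)
          · rintro rfl; exact hqB (Finset.mem_coe.mp haB)
          · rintro rfl; exact hqB (Finset.mem_coe.mp hbB)
        · exact fun x hx => ⟨x, Set.mem_of_mem_of_subset hx (by
            intro y hy
            exact Finset.mem_coe.mpr (Finset.mem_sdiff.mp (Finset.mem_coe.mp hy)).1), rfl⟩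
  · intro u hu v hv huv
    exact Finset.disjoint_of_subset_left (Finset.sdiff_subset)
      (Finset.disjoint_of_subset_right (Finset.sdiff_subset) (hB2 u hu v hv huv))
  · intro u v huv
    have hu := (K.support u v huv).1
    have hv := (K.support u v huv).2
    have hune : u ≠ v := fun e => K.loopless v (e ▸ huv)
    obtain ⟨a, haB, b, hbB, hab⟩ := hB3 u v huv
    by_cases haq : a = q <;> by_cases hbq : b = q
    · exact absurd (by rwa [haq, hbq] at hab) (G.loopless q)
    · have hab' : G.Adj q b := by rwa [haq] at hab
      have hbprs := hpinq b hab'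
      obtain ⟨n0, hn0B, _, hn0prs, hn0q⟩ := getn0 u hu (haq ▸ haB)
      have hn0b : n0 ≠ b := by
        rintro rfl
        exact (Finset.disjoint_left.mp (hB2 u hu v hv hune)) hn0B hbB
      exact ⟨n0, Finset.mem_sdiff.mpr ⟨hn0B, by simp [hn0q]⟩, b,
        Finset.mem_sdiff.mpr ⟨hbB, by simp [hbq]⟩, trio n0 b hn0prs hbprs hn0b⟩
    · have hab' : G.Adj q a := G.symm _ _ (by rwa [hbq] at hab)
      have haprs := hpinq a hab'
      obtain ⟨n0, hn0B, _, hn0prs, hn0q⟩ := getn0 v hv (hbq ▸ hbB)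
      have hn0a : a ≠ n0 := by
        rintro rfl
        exact (Finset.disjoint_left.mp (hB2 u hu v hv hune)) haB hn0B
      exact ⟨a, Finset.mem_sdiff.mpr ⟨haB, by simp [haq]⟩, n0,
        Finset.mem_sdiff.mpr ⟨hn0B, by simp [hn0q]⟩, trio a n0 haprs hn0prs hn0a⟩
    · exact ⟨a, Finset.mem_sdiff.mpr ⟨haB, by simp [haq]⟩, b,
        Finset.mem_sdiff.mpr ⟨hbB, by simp [hbq]⟩, HGadj a b hab haq hbq⟩

lemma D3b.preserve_K5 {G H : FinGraph} (hd : G.D3b H) (hm : G.HasMinor K5Graph) :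
    H.HasMinor K5Graph := by
  obtain ⟨p, q, r, s, hcfg, hverts, hadjH⟩ := hd
  obtain ⟨B, hB1, hB2, hB3⟩ := hm
  apply d3b_transfer G H K5Graph p q r s hcfg hverts hadjH B hB1 hB2 hB3
  intro i hi hqB heq
  obtain ⟨dp, dq, dr, hpq, hqr, hnpr, hprne, hsp, hsq, hsr⟩ := hcfg
  have hspne : s ≠ p := fun e => G.loopless p (e ▸ hsp)
  have hsrne : s ≠ r := fun e => G.loopless r (e ▸ hsr)
  have hpinq : ∀ x, G.Adj q x → x = p ∨ x = r ∨ x = s :=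
    degThreeNbrs G q p r s dq hprne (fun e => hspne e.symm) (fun e => hsrne e.symm)
      (G.symm _ _ hpq) hqr (G.symm _ _ hsq)
  obtain ⟨T, hTc, hTi, hTa⟩ := K5_nbrs i (Finset.mem_range.mp hi)
  have hle : T.card ≤ ({p, r, s} : Finset ℕ).card := by
    apply card_le_of_witness T {p, r, s} B
    · intro a ha b hb hab
      exact hB2 a (K5Graph.support _ _ (hTa a ha)).2 b (K5Graph.support _ _ (hTa b hb)).2 hab
    · intro j hj
      obtain ⟨a, ha, b, hb, hab⟩ := hB3 i j (hTa j hj)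
      have haq : a = q := by
        rw [heq] at ha
        simpa using ha
      refine ⟨b, hb, ?_⟩
      rcases hpinq b (haq ▸ hab) with rfl | rfl | rfl <;> simp
  have h3 : ({p, r, s} : Finset ℕ).card ≤ 3 := by
    apply le_trans (Finset.card_insert_le _ _)
    have := Finset.card_insert_le r ({s} : Finset ℕ)
    simp only [Finset.card_singleton] at this
    omega
  omega

end FinGraph

namespace FinGraph

lemma d3b_K33_sing (G H : FinGraph) (p q r s : ℕ)
    (hcfg : G.D3bConfig p q r s)
    (hverts : H.verts = G.verts \ {q})
    (hadjH : ∀ a b, H.Adj a b ↔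
      (G.Adj a b ∧ a ≠ q ∧ b ≠ q) ∨ (a = p ∧ b = r) ∨ (a = r ∧ b = p))
    (B : ℕ → Finset ℕ)
    (hB1 : ∀ v ∈ K33Graph.verts, (B v).Nonempty ∧ ↑(B v) ⊆ (↑G.verts : Set ℕ) ∧
      G.ConnectedOn ↑(B v))
    (hB2 : ∀ u ∈ K33Graph.verts, ∀ v ∈ K33Graph.verts, u ≠ v → Disjoint (B u) (B v))
    (hB3 : ∀ u v, K33Graph.Adj u v → ∃ a ∈ B u, ∃ b ∈ B v, G.Adj a b)
    (i0 : ℕ) (hi0 : i0 ∈ K33Graph.verts) (hBi0 : B i0 = {q}) :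
    H.HasMinor K33Graph := by
  classical
  obtain ⟨dp, dq, dr, hpq, hqr, hnpr, hprne, hsp, hsq, hsr⟩ := hcfg
  have hpqne : p ≠ q := fun e => G.loopless q (e ▸ hpq)
  have hqrne : q ≠ r := fun e => G.loopless r (e ▸ hqr)
  have hsqne : s ≠ q := fun e => G.loopless q (e ▸ hsq)
  have hspne : s ≠ p := fun e => G.loopless p (e ▸ hsp)
  have hsrne : s ≠ r := fun e => G.loopless r (e ▸ hsr)
  have hpinq : ∀ x, G.Adj q x → x = p ∨ x = r ∨ x = s :=
    degThreeNbrs G q p r s dq hprne (fun e => hspne e.symm) (fun e => hsrne e.symm)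
      (G.symm _ _ hpq) hqr (G.symm _ _ hsq)
  obtain ⟨w, hpw, hwq, hws, hpinp⟩ := thirdNbr G p q s dp (fun e => hsqne e.symm)
    hpq (G.symm _ _ hsp)
  have hwp : w ≠ p := fun e => G.loopless p (e ▸ hpw)
  have trio : ∀ x y, (x = p ∨ x = r ∨ x = s) → (y = p ∨ y = r ∨ y = s) → x ≠ y →
      H.Adj x y := by
    intro x y hx hy hxy
    rcases hx with rfl | rfl | rfl <;> rcases hy with rfl | rfl | rfl
    · exact absurd rfl hxy
    · exact (hadjH _ _).mpr (Or.inr (Or.inl ⟨rfl, rfl⟩))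
    · exact (hadjH _ _).mpr (Or.inl ⟨G.symm _ _ hsp, hpqne, hsqne⟩)
    · exact (hadjH _ _).mpr (Or.inr (Or.inr ⟨rfl, rfl⟩))
    · exact absurd rfl hxy
    · exact (hadjH _ _).mpr (Or.inl ⟨G.symm _ _ hsr, fun e => hqrne e.symm, hsqne⟩)
    · exact (hadjH _ _).mpr (Or.inl ⟨hsp, hsqne, hpqne⟩)
    · exact (hadjH _ _).mpr (Or.inl ⟨hsr, hsqne, fun e => hqrne e.symm⟩)
    · exact absurd rfl hxy
  have HGadj : ∀ a b, G.Adj a b → a ≠ q → b ≠ q → H.Adj a b :=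
    fun a b hab ha hb => (hadjH _ _).mpr (Or.inl ⟨hab, ha, hb⟩)
  have sameSide : ∀ j k, K33Graph.Adj i0 j → K33Graph.Adj i0 k → ¬ K33Graph.Adj j k := by
    intro j k h1 h2 h3
    rcases h1 with ⟨a1, a2, a3⟩ | ⟨a1, a2, a3⟩ <;>
      rcases h2 with ⟨b1, b2, b3⟩ | ⟨b1, b2, b3⟩ <;>
      rcases h3 with ⟨c1, c2, c3⟩ | ⟨c1, c2, c3⟩ <;> omega
  have hqB0 : q ∈ B i0 := by rw [hBi0]; exact Finset.mem_singleton_self q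
  have hq_uniq : ∀ i ∈ K33Graph.verts, q ∈ B i → i = i0 :=
    fun i hi h => uniq_mem K33Graph B hB2 q i i0 hi hi0 h hqB0
  have hqG : ∀ i ∈ K33Graph.verts, ∀ x ∈ B i, x ∈ G.verts := by
    intro i hi x hx
    have := (hB1 i hi).2.1 (Finset.mem_coe.mpr hx)
    exact_mod_cast this
  have hmemH : ∀ x, x ∈ G.verts → x ≠ q → x ∈ H.verts := by
    intro x hx hxq
    rw [hverts]
    exact Finset.mem_sdiff.mpr ⟨hx, by simp [hxq]⟩
  obtain ⟨T, hTc, hTi0, hTa⟩ := K33_nbrs i0 (Finset.mem_range.mp hi0)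
  have hTV : ∀ j ∈ T, j ∈ K33Graph.verts := fun j hj => (K33Graph.support _ _ (hTa j hj)).2
  have hTdisj : ∀ a ∈ T, ∀ b ∈ T, a ≠ b → Disjoint (B a) (B b) :=
    fun a ha b hb hab => hB2 a (hTV a ha) b (hTV b hb) hab
  have hwit : ∀ j ∈ T, ∃ b ∈ B j, b = p ∨ b = r ∨ b = s := by
    intro j hj
    obtain ⟨a, ha, b, hb, hab⟩ := hB3 i0 j (hTa j hj)
    have haq : a = q := by rw [hBi0] at ha; simpa using ha
    exact ⟨b, hb, hpinq b (haq ▸ hab)⟩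
  -- p is placed in some set of T
  have hexp : ∃ ia ∈ T, p ∈ B ia := by
    by_contra h
    push_neg at h
    have hle : T.card ≤ ({r, s} : Finset ℕ).card := by
      apply card_le_of_witness T {r, s} B hTdisj
      intro j hj
      obtain ⟨b, hb, hbprs⟩ := hwit j hj
      rcases hbprs with rfl | rfl | rfl
      · exact absurd hb (h j hj)
      · exact ⟨b, hb, by simp⟩
      · exact ⟨b, hb, by simp⟩
    have h2 : ({r, s} : Finset ℕ).card ≤ 2 := by
      apply le_trans (Finset.card_insert_le _ _)
      simp
    omega
  obtain ⟨ia, hiaT, hpA⟩ := hexp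
  have hiaV : ia ∈ K33Graph.verts := hTV ia hiaT
  have hup_uniq : ∀ i ∈ K33Graph.verts, p ∈ B i → i = ia :=
    fun i hi h => uniq_mem K33Graph B hB2 p i ia hi hiaV h hpA
  have hia0 : ia ≠ i0 := fun e => hTi0 (e ▸ hiaT)
  have hqnotA : q ∉ B ia := fun h => hia0 (hq_uniq ia hiaV h)
  -- r and s are not in B ia
  have hrnotA : r ∉ B ia := by
    intro hx
    have hle : (T.erase ia).card ≤ ({s} : Finset ℕ).card := by
      apply card_le_of_witness (T.erase ia) {s} B
      · intro a ha b hb hab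
        exact hTdisj a (Finset.mem_of_mem_erase ha) b (Finset.mem_of_mem_erase hb) hab
      · intro j hj
        obtain ⟨b, hb, hbprs⟩ := hwit j (Finset.mem_of_mem_erase hj)
        have hjia : j ≠ ia := Finset.ne_of_mem_erase hj
        have hjV : j ∈ K33Graph.verts := hTV j (Finset.mem_of_mem_erase hj)
        rcases hbprs with h | h | h
        · exact absurd (hup_uniq j hjV (h ▸ hb)) hjia
        · exact absurd (uniq_mem K33Graph B hB2 r j ia hjV hiaV (h ▸ hb) hx) hjia
        · exact ⟨b, hb, by simp [h]⟩
    rw [Finset.card_erase_of_mem hiaT, hTc] at hle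
    simp at hle
  have hsnotA : s ∉ B ia := by
    intro hx
    have hle : (T.erase ia).card ≤ ({r} : Finset ℕ).card := by
      apply card_le_of_witness (T.erase ia) {r} B
      · intro a ha b hb hab
        exact hTdisj a (Finset.mem_of_mem_erase ha) b (Finset.mem_of_mem_erase hb) hab
      · intro j hj
        obtain ⟨b, hb, hbprs⟩ := hwit j (Finset.mem_of_mem_erase hj)
        have hjia : j ≠ ia := Finset.ne_of_mem_erase hj
        have hjV : j ∈ K33Graph.verts := hTV j (Finset.mem_of_mem_erase hj)
        rcases hbprs with h | h | h
        · exact absurd (hup_uniq j hjV (h ▸ hb)) hjia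
        · exact ⟨b, hb, by simp [h]⟩
        · exact absurd (uniq_mem K33Graph B hB2 s j ia hjV hiaV (h ▸ hb) hx) hjia
    rw [Finset.card_erase_of_mem hiaT, hTc] at hle
    simp at hle
  -- s is placed in some set of T
  have hexs : ∃ ic ∈ T, s ∈ B ic := by
    by_contra h
    push_neg at h
    have hle : T.card ≤ ({p, r} : Finset ℕ).card := by
      apply card_le_of_witness T {p, r} B hTdisj
      intro j hj
      obtain ⟨b, hb, hbprs⟩ := hwit j hj
      rcases hbprs with rfl | rfl | rfl
      · exact ⟨b, hb, by simp⟩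
      · exact ⟨b, hb, by simp⟩
      · exact absurd hb (h j hj)
    have h2 : ({p, r} : Finset ℕ).card ≤ 2 := by
      apply le_trans (Finset.card_insert_le _ _)
      simp
    omega
  obtain ⟨ic, hicT, hsC⟩ := hexs
  have hicV : ic ∈ K33Graph.verts := hTV ic hicT
  have hs_uniq : ∀ i ∈ K33Graph.verts, s ∈ B i → i = ic :=
    fun i hi h => uniq_mem K33Graph B hB2 s i ic hi hicV h hsC
  -- B ia ≠ {p}
  have hnotSingP : ∃ x ∈ B ia, x ≠ p := by
    by_contra h
    push_neg at h
    obtain ⟨T2, hT2c, hT2i, hT2a⟩ := K33_nbrs ia (Finset.mem_range.mp hiaV)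
    have hle : T2.card ≤ ({q, w} : Finset ℕ).card := by
      apply card_le_of_witness T2 {q, w} B
      · intro a ha b hb hab
        exact hB2 a (K33Graph.support _ _ (hT2a a ha)).2 b
          (K33Graph.support _ _ (hT2a b hb)).2 hab
      · intro j hj
        obtain ⟨a, ha, b, hb, hab⟩ := hB3 ia j (hT2a j hj)
        have hap : a = p := h a ha
        have hjV : j ∈ K33Graph.verts := (K33Graph.support _ _ (hT2a j hj)).2
        rcases hpinp b (hap ▸ hab) with rfl | rfl | rfl
        · exact ⟨b, hb, by simp⟩
        · exfalso
          have : j = ic := hs_uniq j hjV hb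
          exact sameSide ia ic (hTa ia hiaT) (hTa ic hicT) (this ▸ hT2a j hj)
        · exact ⟨b, hb, by simp⟩
    have h2 : ({q, w} : Finset ℕ).card ≤ 2 := by
      apply le_trans (Finset.card_insert_le _ _)
      simp
    omega
  obtain ⟨x0, hx0, hx0p⟩ := hnotSingP
  have hpinBia : ∀ z, z ∈ B ia → G.Adj p z → z = w := by
    intro z hz hpz
    rcases hpinp z hpz with rfl | rfl | rfl
    · exact absurd hz hqnotA
    · exact absurd hz hsnotA
    · rfl
  have hwA : w ∈ B ia := by
    obtain ⟨y, hy, hady⟩ := firstNbr G ↑(B ia) (hB1 ia hiaV).2.2 p x0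
      (Finset.mem_coe.mpr hpA) (Finset.mem_coe.mpr hx0) (fun e => hx0p e.symm)
    have := hpinBia y (Finset.mem_coe.mp hy) hady
    exact this ▸ Finset.mem_coe.mp hy
  have hpG : p ∈ G.verts := hqG ia hiaV p hpA
  -- the new branch sets
  set C : ℕ → Finset ℕ := fun i => if i = i0 then {p} else if i = ia then B ia \ {p} else B i
    with hCdef
  have e0 : C i0 = {p} := by simp [hCdef]
  have eA : C ia = B ia \ {p} := by simp [hCdef, hia0]
  have eO : ∀ i, i ≠ i0 → i ≠ ia → C i = B i := by
    intro i h1 h2; simp [hCdef, h1, h2]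
  have hsubB : ∀ i, i ≠ i0 → C i ⊆ B i := by
    intro i h1
    by_cases h2 : i = ia
    · rw [h2, eA]; exact Finset.sdiff_subset
    · rw [eO i h1 h2]
  refine ⟨C, ?_, ?_, ?_⟩
  · intro v hv
    by_cases hv0 : v = i0
    · rw [hv0, e0]
      refine ⟨⟨p, Finset.mem_singleton_self p⟩, ?_, ?_⟩
      · intro x hx
        simp only [Finset.coe_singleton, Set.mem_singleton_iff] at hx
        rw [hx]
        exact Finset.mem_coe.mpr (hmemH p hpG hpqne)
      · intro u hu v' hv'
        simp only [Finset.coe_singleton, Set.mem_singleton_iff] at hu hv'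
        rw [hu, hv']
        exact Relation.ReflTransGen.refl
    · by_cases hva : v = ia
      · rw [hva, eA]
        refine ⟨⟨w, Finset.mem_sdiff.mpr ⟨hwA, by simp [hwp]⟩⟩, ?_, ?_⟩
        · intro x hx
          obtain ⟨hxB, _⟩ := Finset.mem_sdiff.mp (Finset.mem_coe.mp hx)
          refine Finset.mem_coe.mpr (hmemH x (hqG ia hiaV x hxB) ?_)
          rintro rfl
          exact hqnotA hxB
        · apply connMap G H ↑(B ia) ↑(B ia \ ({p} : Finset ℕ)) (fun a => if a = p then w else a)
            (hB1 ia hiaV).2.2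
          · intro a ha
            by_cases hap : a = p
            · rw [if_pos hap]
              exact Finset.mem_coe.mpr (Finset.mem_sdiff.mpr ⟨hwA, by simp [hwp]⟩)
            · rw [if_neg hap]
              exact Finset.mem_coe.mpr (Finset.mem_sdiff.mpr ⟨Finset.mem_coe.mp ha,
                by simp [hap]⟩)
          · intro a b hab haB hbB
            by_cases hap : a = p <;> by_cases hbp : b = p
            · exact absurd (by rwa [hap, hbp] at hab) (G.loopless p)
            · have : b = w := hpinBia b (Finset.mem_coe.mp hbB) (by rwa [hap] at hab)
              exact Or.inl (by rw [if_pos hap, if_neg hbp, this])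
            · have : a = w := hpinBia a (Finset.mem_coe.mp haB)
                (G.symm _ _ (by rwa [hbp] at hab))
              exact Or.inl (by rw [if_pos hbp, if_neg hap, this])
            · refine Or.inr (by
                rw [if_neg hap, if_neg hbp]
                refine HGadj a b hab ?_ ?_
                · rintro rfl; exact hqnotA (Finset.mem_coe.mp haB)
                · rintro rfl; exact hqnotA (Finset.mem_coe.mp hbB))
          · intro x hx
            obtain ⟨hxB, hxp⟩ := Finset.mem_sdiff.mp (Finset.mem_coe.mp hx)
            have hxp' : x ≠ p := by simpa using hxp
            exact ⟨x, Finset.mem_coe.mpr hxB, by rw [if_neg hxp']⟩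
      · rw [eO v hv0 hva]
        have hqnotV : q ∉ B v := fun h => hv0 (hq_uniq v hv h)
        refine ⟨(hB1 v hv).1, ?_, ?_⟩
        · intro x hx
          refine Finset.mem_coe.mpr (hmemH x (hqG v hv x (Finset.mem_coe.mp hx)) ?_)
          rintro rfl
          exact hqnotV (Finset.mem_coe.mp hx)
        · apply connMap G H ↑(B v) ↑(B v) id (hB1 v hv).2.2 (fun a ha => ha)
          · intro a b hab haB hbB
            refine Or.inr (HGadj a b hab ?_ ?_)
            · rintro rfl; exact hqnotV (Finset.mem_coe.mp haB)
            · rintro rfl; exact hqnotV (Finset.mem_coe.mp hbB)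
          · exact fun x hx => ⟨x, hx, rfl⟩
  · intro u hu v hv huv
    rw [Finset.disjoint_left]
    intro x hxu hxv
    by_cases hu0 : u = i0
    · rw [hu0, e0] at hxu
      rw [Finset.mem_singleton] at hxu
      have hv0 : v ≠ i0 := fun e => huv (hu0.trans e.symm)
      by_cases hva : v = ia
      · rw [hva, eA] at hxv
        exact (by simpa using (Finset.mem_sdiff.mp hxv).2 : x ≠ p) hxu
      · rw [eO v hv0 hva] at hxv
        exact hva (hup_uniq v hv (hxu ▸ hxv))
    · by_cases hv0 : v = i0
      · rw [hv0, e0] at hxv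
        rw [Finset.mem_singleton] at hxv
        by_cases hua : u = ia
        · rw [hua, eA] at hxu
          exact (by simpa using (Finset.mem_sdiff.mp hxu).2 : x ≠ p) hxv
        · rw [eO u hu0 hua] at hxu
          exact hua (hup_uniq u hu (hxv ▸ hxu))
      · exact (Finset.disjoint_left.mp (hB2 u hu v hv huv)) (hsubB u hu0 hxu)
          (hsubB v hv0 hxv)
  · intro u v huv
    have hu := (K33Graph.support u v huv).1
    have hv := (K33Graph.support u v huv).2
    have hune : u ≠ v := fun e => K33Graph.loopless v (e ▸ huv)
    by_cases hu0 : u = i0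
    · subst hu0
      obtain ⟨a, ha, b, hb, hab⟩ := hB3 u v huv
      have haq : a = q := by rw [hBi0] at ha; simpa using ha
      have hv0 : v ≠ u := fun e => hune e.symm
      rcases hpinq b (haq ▸ hab) with rfl | rfl | rfl
      · have hva : v = ia := hup_uniq v hv hb
        refine ⟨b, by rw [e0]; exact Finset.mem_singleton_self b, w, ?_, ?_⟩
        · rw [hva, eA]
          exact Finset.mem_sdiff.mpr ⟨hwA, by simp [hwp]⟩
        · exact HGadj b w hpw hpqne hwq
      · have hva : v ≠ ia := by
          rintro rfl
          exact hrnotA hb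
        refine ⟨p, by rw [e0]; exact Finset.mem_singleton_self p, b, ?_, ?_⟩
        · rw [eO v hv0 hva]; exact hb
        · exact trio p b (Or.inl rfl) (Or.inr (Or.inl rfl)) hprne
      · have hva : v ≠ ia := by
          rintro rfl
          exact hsnotA hb
        refine ⟨p, by rw [e0]; exact Finset.mem_singleton_self p, b, ?_, ?_⟩
        · rw [eO v hv0 hva]; exact hb
        · exact trio p b (Or.inl rfl) (Or.inr (Or.inr rfl)) (fun e => hspne e.symm)
    · by_cases hv0 : v = i0
      · subst hv0
        obtain ⟨a, ha, b, hb, hab⟩ := hB3 u v huv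
        have hbq : b = q := by rw [hBi0] at hb; simpa using hb
        rcases hpinq a (G.symm _ _ (hbq ▸ hab)) with rfl | rfl | rfl
        · have hua : u = ia := hup_uniq u hu ha
          refine ⟨w, ?_, a, by rw [e0]; exact Finset.mem_singleton_self a, ?_⟩
          · rw [hua, eA]
            exact Finset.mem_sdiff.mpr ⟨hwA, by simp [hwp]⟩
          · exact HGadj w a (G.symm _ _ hpw) hwq hpqne
        · have hua : u ≠ ia := by
            rintro rfl
            exact hrnotA ha
          refine ⟨a, by rw [eO u hu0 hua]; exact ha, p,
            by rw [e0]; exact Finset.mem_singleton_self p, ?_⟩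
          exact trio a p (Or.inr (Or.inl rfl)) (Or.inl rfl) (fun e => hprne e.symm)
        · have hua : u ≠ ia := by
            rintro rfl
            exact hsnotA ha
          refine ⟨a, by rw [eO u hu0 hua]; exact ha, p,
            by rw [e0]; exact Finset.mem_singleton_self p, ?_⟩
          exact trio a p (Or.inr (Or.inr rfl)) (Or.inl rfl) hspne
      · by_cases hua : u = ia
        · subst hua
          obtain ⟨a, ha, b, hb, hab⟩ := hB3 u v huv
          have hap : a ≠ p := by
            rintro rfl
            rcases hpinp b hab with rfl | rfl | rfl
            · exact hv0 (hq_uniq v hv hb)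
            · exact sameSide u ic (hTa u hiaT) (hTa ic hicT) ((hs_uniq v hv hb) ▸ huv)
            · exact hune ((uniq_mem K33Graph B hB2 b v u hv hu hb hwA) ▸ rfl)
          refine ⟨a, by rw [eA]; exact Finset.mem_sdiff.mpr ⟨ha, by simp [hap]⟩, b,
            by rw [eO v hv0 (fun e => hune (e ▸ rfl))]; exact hb, ?_⟩
          refine HGadj a b hab ?_ ?_
          · rintro rfl; exact hqnotA ha
          · rintro rfl; exact hv0 (hq_uniq v hv hb)
        · by_cases hva : v = ia
          · subst hva
            obtain ⟨a, ha, b, hb, hab⟩ := hB3 u v huv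
            have hbp : b ≠ p := by
              rintro rfl
              rcases hpinp a (G.symm _ _ hab) with rfl | rfl | rfl
              · exact hu0 (hq_uniq u hu ha)
              · exact sameSide v ic (hTa v hiaT) (hTa ic hicT)
                  (K33Graph.symm _ _ ((hs_uniq u hu ha) ▸ huv))
              · exact hune ((uniq_mem K33Graph B hB2 a u v hu hv ha hwA) ▸ rfl)
            refine ⟨a, by rw [eO u hu0 (fun e => hune (e ▸ rfl))]; exact ha, b,
              by rw [eA]; exact Finset.mem_sdiff.mpr ⟨hb, by simp [hbp]⟩, ?_⟩
            refine HGadj a b hab ?_ ?_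
            · rintro rfl; exact hu0 (hq_uniq u hu ha)
            · rintro rfl; exact hqnotA hb
          · obtain ⟨a, ha, b, hb, hab⟩ := hB3 u v huv
            refine ⟨a, by rw [eO u hu0 hua]; exact ha, b, by rw [eO v hv0 hva]; exact hb, ?_⟩
            refine HGadj a b hab ?_ ?_
            · rintro rfl; exact hu0 (hq_uniq u hu ha)
            · rintro rfl; exact hv0 (hq_uniq v hv hb)

lemma D3b.preserve_K33 {G H : FinGraph} (hd : G.D3b H) (hm : G.HasMinor K33Graph) :
    H.HasMinor K33Graph := by
  obtain ⟨p, q, r, s, hcfg, hverts, hadjH⟩ := hd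
  obtain ⟨B, hB1, hB2, hB3⟩ := hm
  by_cases hS : ∀ i ∈ K33Graph.verts, q ∈ B i → B i ≠ {q}
  · exact d3b_transfer G H K33Graph p q r s hcfg hverts hadjH B hB1 hB2 hB3 hS
  · push_neg at hS
    obtain ⟨i0, hi0, _, hBi0⟩ := hS
    exact d3b_K33_sing G H p q r s hcfg hverts hadjH B hB1 hB2 hB3 i0 hi0 hBi0

end FinGraph

namespace FinGraph

lemma bad_step {G H : FinGraph} (hs : G.D3Step H)
    (hb : G.HasMinor K5Graph ∨ G.HasMinor K33Graph) :
    H.HasMinor K5Graph ∨ H.HasMinor K33Graph := by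
  rcases hs with ha | hbb
  · rcases hb with h5 | h33
    · exact D3a.preserve_K5 ha h5
    · exact Or.inr (D3a.preserve_K33 ha h33)
  · rcases hb with h5 | h33
    · exact Or.inl (D3b.preserve_K5 hbb h5)
    · exact Or.inr (D3b.preserve_K33 hbb h33)

end FinGraph

theorem d3_reducible_planar (G : FinGraph) (h : G.D3Reducible) :
    G.Planar := by
  obtain ⟨Kf, hrtg, hK4⟩ := h
  have hnb : ¬(G.HasMinor FinGraph.K5Graph ∨ G.HasMinor FinGraph.K33Graph) := by
    refine Relation.ReflTransGen.head_induction_on hrtg ?_ ?_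
    · rintro (h5 | h33)
      · refine FinGraph.no_minor_of_card Kf FinGraph.K5Graph ?_ h5
        rw [hK4.1]
        show 4 < (Finset.range 5).card
        simp
      · refine FinGraph.no_minor_of_card Kf FinGraph.K33Graph ?_ h33
        rw [hK4.1]
        show 4 < (Finset.range 6).card
        simp
    · intro a c h' _ ih hbad
      exact ih (FinGraph.bad_step h' hbad)
  exact ⟨fun h5 => hnb (Or.inl h5), fun h33 => hnb (Or.inr h33)⟩
end

section
/- In the unique planar embedding of a D3-reducible graph, every triangle (3-cycle) of the graph is a face. -/
namespace FinGraph

section Aux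

variable {G H : FinGraph}

lemma adj_ne {u v : ℕ} (h : G.Adj u v) : u ≠ v := fun e => G.loopless v (e ▸ h)

lemma rw_single {S : Set ℕ} {u v : ℕ} (h : G.Adj u v) (hu : u ∈ S) (hv : v ∈ S) :
    G.ReachableWithin S u v := Relation.ReflTransGen.single ⟨h, hu, hv⟩

lemma rw_symm {S : Set ℕ} {u v : ℕ} (h : G.ReachableWithin S u v) :
    G.ReachableWithin S v u := by
  induction h with
  | refl => exact Relation.ReflTransGen.refl
  | tail _ hab ih => exact Relation.ReflTransGen.head ⟨G.symm _ _ hab.1, hab.2.2, hab.2.1⟩ ih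

lemma rw_trans {S : Set ℕ} {u v w : ℕ} (h : G.ReachableWithin S u v)
    (h' : G.ReachableWithin S v w) : G.ReachableWithin S u w :=
  Relation.ReflTransGen.trans h h'

lemma neighborSet_finite (v : ℕ) : (G.neighborSet v).Finite :=
  Set.Finite.subset G.verts.finite_toSet (fun u hu => (G.support v u hu).2)

lemma neighbors_eq3 {v a b c : ℕ} (hdeg : G.degree v = 3)
    (ha : G.Adj v a) (hb : G.Adj v b) (hc : G.Adj v c)
    (hab : a ≠ b) (hac : a ≠ c) (hbc : b ≠ c) :
    G.neighborSet v = {a, b, c} := by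
  have hfin := G.neighborSet_finite (v := v)
  refine (Set.eq_of_subset_of_ncard_le ?_ ?_ hfin).symm
  · intro u hu
    rcases hu with rfl | rfl | rfl
    · exact ha
    · exact hb
    · exact hc
  · have h3 : ({a, b, c} : Set ℕ).ncard = 3 := by
      rw [Set.ncard_insert_of_notMem (by simp [hab, hac]) ((Set.finite_singleton c).insert b),
        Set.ncard_pair hbc]
    rw [h3]
    exact le_of_eq hdeg

lemma adj_mem_of_neighbors {v a u : ℕ} {Sn : Set ℕ} (hN : G.neighborSet v = Sn)
    (h : G.Adj v u) : u ∈ Sn := hN ▸ h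

lemma tri_adj {a b c u v : ℕ} (hab : G.Adj a b) (hbc : G.Adj b c) (hac : G.Adj a c)
    (hu : u ∈ ({a, b, c} : Set ℕ)) (hv : v ∈ ({a, b, c} : Set ℕ)) (huv : u ≠ v) :
    G.Adj u v := by
  rcases hu with rfl | rfl | rfl <;> rcases hv with rfl | rfl | rfl <;>
    first
      | exact absurd rfl huv
      | assumption
      | exact G.symm _ _ hab
      | exact G.symm _ _ hbc
      | exact G.symm _ _ hac

lemma lift_reach {S S' : Set ℕ} (φ : ℕ → ℕ)
    (hstep : ∀ a b, H.Adj a b → a ∈ S' → b ∈ S' → G.ReachableWithin S (φ a) (φ b)) :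
    ∀ {a b : ℕ}, H.ReachableWithin S' a b → G.ReachableWithin S (φ a) (φ b) := by
  intro a b h
  induction h with
  | refl => exact Relation.ReflTransGen.refl
  | tail _ h2 ih => exact rw_trans ih (hstep _ _ h2.1 h2.2.1 h2.2.2)

lemma connectedOn_of_sim {S S' : Set ℕ} (φ : ℕ → ℕ)
    (hH : H.ConnectedOn S')
    (hstep : ∀ a b, H.Adj a b → a ∈ S' → b ∈ S' → G.ReachableWithin S (φ a) (φ b))
    (hanchor : ∀ u ∈ S, ∃ w ∈ S', G.ReachableWithin S u (φ w)) :
    G.ConnectedOn S := by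
  intro u hu v hv
  obtain ⟨w1, hw1, hr1⟩ := hanchor u hu
  obtain ⟨w2, hw2, hr2⟩ := hanchor v hv
  exact rw_trans (rw_trans hr1 (lift_reach φ hstep (hH w1 hw1 w2 hw2))) (rw_symm hr2)

/-- The invariant propagated along D3 reductions. -/
def Inv (G : FinGraph) : Prop :=
  G.ThreeConnected ∧
  ∀ a b c : ℕ, G.Adj a b → G.Adj b c → G.Adj a c →
    G.ConnectedOn (↑G.verts \ ({a, b, c} : Set ℕ))

lemma inv_K4 (h : G.IsK4) : G.Inv := by
  have hconn : ∀ S : Set ℕ, S ⊆ ↑G.verts → G.ConnectedOn S := by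
    intro S hS u hu v hv
    by_cases huv : u = v
    · exact huv ▸ Relation.ReflTransGen.refl
    · exact rw_single (h.2 u (hS hu) v (hS hv) huv) hu hv
  refine ⟨⟨?_, fun x y => hconn _ Set.diff_subset⟩,
    fun a b c _ _ _ => hconn _ Set.diff_subset⟩
  rw [h.1]; norm_num

end Aux

section D3aSec

variable {G H : FinGraph} {p q r p' q' r' t : ℕ}

lemma d3a_nbrs (hcfg : G.D3aConfig p q r p' q' r') :
    G.neighborSet p = {q, r, p'} ∧ G.neighborSet q = {p, r, q'} ∧
      G.neighborSet r = {p, q, r'} := by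
  obtain ⟨dp, dq, dr, hpq, hqr, hpr, hp1, hq1, hr1, hpn, hqn, hrn, h12, h13, h23⟩ := hcfg
  simp only [Set.mem_insert_iff, Set.mem_singleton_iff, not_or] at hpn hqn hrn
  refine ⟨neighbors_eq3 dp hpq hpr hp1 (adj_ne hqr) (fun e => hpn.2.1 e.symm)
      (fun e => hpn.2.2 e.symm),
    neighbors_eq3 dq (G.symm _ _ hpq) hqr hq1 (adj_ne hpr) (fun e => hqn.1 e.symm)
      (fun e => hqn.2.2 e.symm),
    neighbors_eq3 dr (G.symm _ _ hpr) (G.symm _ _ hqr) hr1 (adj_ne hpq)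
      (fun e => hrn.1 e.symm) (fun e => hrn.2.1 e.symm)⟩

lemma d3a_config_swap12 (hcfg : G.D3aConfig p q r p' q' r') : G.D3aConfig q p r q' p' r' := by
  obtain ⟨dp, dq, dr, hpq, hqr, hpr, hp1, hq1, hr1, hpn, hqn, hrn, h12, h13, h23⟩ := hcfg
  have hset : ({q, p, r} : Set ℕ) = {p, q, r} := by ext z; simp; tauto
  exact ⟨dq, dp, dr, G.symm _ _ hpq, hpr, hqr, hq1, hp1, hr1,
    by rw [hset]; exact hqn, by rw [hset]; exact hpn, by rw [hset]; exact hrn,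
    Ne.symm h12, h23, h13⟩

lemma d3a_config_swap13 (hcfg : G.D3aConfig p q r p' q' r') : G.D3aConfig r q p r' q' p' := by
  obtain ⟨dp, dq, dr, hpq, hqr, hpr, hp1, hq1, hr1, hpn, hqn, hrn, h12, h13, h23⟩ := hcfg
  have hset : ({r, q, p} : Set ℕ) = {p, q, r} := by ext z; simp; tauto
  exact ⟨dr, dq, dp, G.symm _ _ hqr, G.symm _ _ hpq, G.symm _ _ hpr, hr1, hq1, hp1,
    by rw [hset]; exact hrn, by rw [hset]; exact hqn, by rw [hset]; exact hpn,
    Ne.symm h23, Ne.symm h13, Ne.symm h12⟩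

lemma d3a_tri_first (hcfg : G.D3aConfig p q r p' q' r') {b c : ℕ}
    (hab : G.Adj p b) (hac : G.Adj p c) (hbc : G.Adj b c) :
    ({p, b, c} : Set ℕ) = {p, q, r} := by
  obtain ⟨hNp, hNq, hNr⟩ := d3a_nbrs hcfg
  obtain ⟨dp, dq, dr, hpq, hqr, hpr, hp1, hq1, hr1, hpn, hqn, hrn, h12, h13, h23⟩ := hcfg
  simp only [Set.mem_insert_iff, Set.mem_singleton_iff, not_or] at hpn hqn hrn
  have hb : b ∈ ({q, r, p'} : Set ℕ) := by
    have : b ∈ G.neighborSet p := hab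
    rwa [hNp] at this
  have hc : c ∈ ({q, r, p'} : Set ℕ) := by
    have : c ∈ G.neighborSet p := hac
    rwa [hNp] at this
  have hbc' : b ≠ c := adj_ne hbc
  have hqn' : ¬ G.Adj q p' := by
    intro hadj
    have : p' ∈ ({p, r, q'} : Set ℕ) := by
      have : p' ∈ G.neighborSet q := hadj
      rwa [hNq] at this
    rcases this with e | e | e
    · exact hpn.1 e
    · exact hpn.2.2 e
    · exact h12 e
  have hrn' : ¬ G.Adj r p' := by
    intro hadj
    have : p' ∈ ({p, q, r'} : Set ℕ) := by
      have : p' ∈ G.neighborSet r := hadj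
      rwa [hNr] at this
    rcases this with e | e | e
    · exact hpn.1 e
    · exact hpn.2.1 e
    · exact h13 e
  rcases hb with rfl | rfl | rfl <;> rcases hc with rfl | rfl | rfl
  · exact absurd rfl hbc'
  · rfl
  · exact absurd hbc hqn'
  · ext z; simp; tauto
  · exact absurd rfl hbc'
  · exact absurd hbc hrn'
  · exact absurd (G.symm _ _ hbc) hqn'
  · exact absurd (G.symm _ _ hbc) hrn'
  · exact absurd rfl hbc'

lemma d3a_tri_vert (hcfg : G.D3aConfig p q r p' q' r') {a b c : ℕ}
    (ha : a ∈ ({p, q, r} : Set ℕ)) (hab : G.Adj a b) (hac : G.Adj a c) (hbc : G.Adj b c) :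
    ({a, b, c} : Set ℕ) = {p, q, r} := by
  rcases ha with rfl | rfl | rfl
  · exact d3a_tri_first hcfg hab hac hbc
  · have h := d3a_tri_first (d3a_config_swap12 hcfg) hab hac hbc
    rw [h]; ext z; simp; tauto
  · have h := d3a_tri_first (d3a_config_swap13 hcfg) hab hac hbc
    rw [h]; ext z; simp; tauto

lemma d3a_tri (hcfg : G.D3aConfig p q r p' q' r') {a b c : ℕ}
    (hab : G.Adj a b) (hbc : G.Adj b c) (hac : G.Adj a c)
    (hm : a ∈ ({p, q, r} : Set ℕ) ∨ b ∈ ({p, q, r} : Set ℕ) ∨ c ∈ ({p, q, r} : Set ℕ)) :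
    ({a, b, c} : Set ℕ) = {p, q, r} := by
  rcases hm with h | h | h
  · exact d3a_tri_vert hcfg h hab hac hbc
  · have e := d3a_tri_vert hcfg h (G.symm _ _ hab) hbc hac
    rw [← e]; ext z; simp; tauto
  · have e := d3a_tri_vert hcfg h (G.symm _ _ hac) (G.symm _ _ hbc) hab
    rw [← e]; ext z; simp; tauto

lemma d3a_step (hcfg : G.D3aConfig p q r p' q' r') (htG : t ∉ G.verts)
    (hA : ∀ a b, H.Adj a b ↔
      (G.Adj a b ∧ a ∉ ({p, q, r} : Set ℕ) ∧ b ∉ ({p, q, r} : Set ℕ)) ∨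
      (a = t ∧ b ∈ ({p', q', r'} : Set ℕ)) ∨
      (b = t ∧ a ∈ ({p', q', r'} : Set ℕ)))
    {S S' : Set ℕ}
    (h1 : ∀ w, w ∈ S' → w ≠ t → w ∈ S)
    (h2 : t ∈ S' → p ∈ S ∧ q ∈ S ∧ r ∈ S) :
    ∀ a b, H.Adj a b → a ∈ S' → b ∈ S' →
      G.ReachableWithin S (if a = t then p else a) (if b = t then p else b) := by
  obtain ⟨dp, dq, dr, hpq, hqr, hpr, hp1, hq1, hr1, hpn, hqn, hrn, h12, h13, h23⟩ := hcfg
  intro a b hab haS hbS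
  have hGt : ∀ u, ¬ G.Adj t u := fun u h => htG (G.support _ _ h).1
  have hGt' : ∀ u, ¬ G.Adj u t := fun u h => htG (G.support _ _ h).2
  by_cases hat : a = t <;> by_cases hbt : b = t
  · rw [hat, hbt] at hab
    exact absurd hab (H.loopless t)
  · rcases (hA a b).1 hab with ⟨hg, _, _⟩ | ⟨_, hb⟩ | ⟨e, _⟩
    · rw [hat] at hg
      exact absurd hg (hGt b)
    · obtain ⟨hp2, hq2, hr2⟩ := h2 (hat ▸ haS)
      have hbS' : b ∈ S := h1 b hbS hbt
      rw [if_pos hat, if_neg hbt]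
      rcases hb with rfl | rfl | rfl
      · exact rw_single hp1 hp2 hbS'
      · exact rw_trans (rw_single hpq hp2 hq2) (rw_single hq1 hq2 hbS')
      · exact rw_trans (rw_single hpr hp2 hr2) (rw_single hr1 hr2 hbS')
    · exact absurd e hbt
  · rcases (hA a b).1 hab with ⟨hg, _, _⟩ | ⟨e, _⟩ | ⟨_, ha⟩
    · rw [hbt] at hg
      exact absurd hg (hGt' a)
    · exact absurd e hat
    · obtain ⟨hp2, hq2, hr2⟩ := h2 (hbt ▸ hbS)
      have haS' : a ∈ S := h1 a haS hat
      rw [if_pos hbt, if_neg hat]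
      rcases ha with rfl | rfl | rfl
      · exact rw_single (G.symm _ _ hp1) haS' hp2
      · exact rw_trans (rw_single (G.symm _ _ hq1) haS' hq2)
          (rw_single (G.symm _ _ hpq) hq2 hp2)
      · exact rw_trans (rw_single (G.symm _ _ hr1) haS' hr2)
          (rw_single (G.symm _ _ hpr) hr2 hp2)
  · rcases (hA a b).1 hab with ⟨hg, _, _⟩ | ⟨e, _⟩ | ⟨e, _⟩
    · rw [if_neg hat, if_neg hbt]
      exact rw_single hg (h1 a haS hat) (h1 b hbS hbt)
    · exact absurd e hat
    · exact absurd e hbt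

lemma d3a_anchor (hcfg : G.D3aConfig p q r p' q' r') (x y : ℕ)
    (hp : p ∈ (↑G.verts : Set ℕ) \ {x, y}) :
    ∃ w, w ∈ ({p', q', r'} : Set ℕ) ∧ w ∈ (↑G.verts : Set ℕ) \ {x, y} ∧
      G.ReachableWithin ((↑G.verts : Set ℕ) \ {x, y}) p w := by
  obtain ⟨dp, dq, dr, hpq, hqr, hpr, hp1, hq1, hr1, hpn, hqn, hrn, h12, h13, h23⟩ := hcfg
  simp only [Set.mem_insert_iff, Set.mem_singleton_iff, not_or] at hpn hqn hrn
  have hqv : q ∈ G.verts := (G.support _ _ hpq).2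
  have hrv : r ∈ G.verts := (G.support _ _ hpr).2
  have hp'v : p' ∈ G.verts := (G.support _ _ hp1).2
  have hq'v : q' ∈ G.verts := (G.support _ _ hq1).2
  have hr'v : r' ∈ G.verts := (G.support _ _ hr1).2
  have hmem : ∀ w : ℕ, w ∈ G.verts → w ≠ x → w ≠ y →
      w ∈ (↑G.verts : Set ℕ) \ {x, y} := by
    intro w hw e1 e2
    exact ⟨hw, by simp [e1, e2]⟩
  by_cases hp' : p' = x ∨ p' = y
  · by_cases hq2 : q = x ∨ q = y ∨ q' = x ∨ q' = y
    · have hkey : r ≠ x ∧ r ≠ y ∧ r' ≠ x ∧ r' ≠ y := by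
        have e1 : p' ≠ q := hpn.2.1
        have e2 : p' ≠ q' := h12
        have e3 : r ≠ p' := fun e => hpn.2.2 e.symm
        have e4 : r ≠ q := (adj_ne hqr).symm
        have e5 : r ≠ q' := fun e => hqn.2.2 e.symm
        have e6 : r' ≠ p' := fun e => h13 e.symm
        have e7 : r' ≠ q := fun e => hrn.2.1 e
        have e8 : r' ≠ q' := fun e => h23 e.symm
        rcases hp' with e | e <;> rcases hq2 with f | f | f | f <;> omega
      obtain ⟨ha, hb, hc, hd⟩ := hkey
      exact ⟨r', by simp, hmem r' hr'v hc hd,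
        rw_trans (rw_single hpr hp (hmem r hrv ha hb))
          (rw_single hr1 (hmem r hrv ha hb) (hmem r' hr'v hc hd))⟩
    · push_neg at hq2
      obtain ⟨ha, hb, hc, hd⟩ := hq2
      exact ⟨q', by simp, hmem q' hq'v hc hd,
        rw_trans (rw_single hpq hp (hmem q hqv ha hb))
          (rw_single hq1 (hmem q hqv ha hb) (hmem q' hq'v hc hd))⟩
  · push_neg at hp'
    exact ⟨p', by simp, hmem p' hp'v hp'.1 hp'.2,
      rw_single hp1 hp (hmem p' hp'v hp'.1 hp'.2)⟩

set_option maxHeartbeats 2000000 in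
lemma inv_d3a (hcfg : G.D3aConfig p q r p' q' r') (htG : t ∉ G.verts)
    (hV : H.verts = (G.verts \ {p, q, r}) ∪ {t})
    (hA : ∀ a b, H.Adj a b ↔
      (G.Adj a b ∧ a ∉ ({p, q, r} : Set ℕ) ∧ b ∉ ({p, q, r} : Set ℕ)) ∨
      (a = t ∧ b ∈ ({p', q', r'} : Set ℕ)) ∨
      (b = t ∧ a ∈ ({p', q', r'} : Set ℕ)))
    (hH : H.Inv) : G.Inv := by
  have hcfg' := hcfg
  obtain ⟨dp, dq, dr, hpq, hqr, hpr, hp1, hq1, hr1, hpn, hqn, hrn, h12, h13, h23⟩ := hcfg'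
  simp only [Set.mem_insert_iff, Set.mem_singleton_iff, not_or] at hpn hqn hrn
  have hpv : p ∈ G.verts := (G.support _ _ hpq).1
  have hqv : q ∈ G.verts := (G.support _ _ hpq).2
  have hrv : r ∈ G.verts := (G.support _ _ hpr).2
  have hHmem : ∀ w, w ∈ H.verts ↔ (w ∈ G.verts ∧ w ≠ p ∧ w ≠ q ∧ w ≠ r) ∨ w = t := by
    intro w
    rw [hV]
    simp only [Finset.mem_union, Finset.mem_sdiff, Finset.mem_insert,
      Finset.mem_singleton, not_or]
  have htH : t ∈ H.verts := (hHmem t).2 (Or.inr rfl)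
  have hneq : p ≠ q ∧ p ≠ r ∧ q ≠ r := ⟨adj_ne hpq, adj_ne hpr, adj_ne hqr⟩
  constructor
  · -- ThreeConnected
    constructor
    · -- cardinality
      have hcardH : 3 < H.verts.card := hH.1.1
      have hsub : ({p, q, r} : Finset ℕ) ⊆ G.verts := by
        intro w hw
        simp only [Finset.mem_insert, Finset.mem_singleton] at hw
        rcases hw with rfl | rfl | rfl <;> assumption
      have h3 : ({p, q, r} : Finset ℕ).card = 3 := by
        rw [Finset.card_insert_of_notMem (by simp [hneq.1, hneq.2.1]),
          Finset.card_insert_of_notMem (by simp [hneq.2.2]), Finset.card_singleton]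
      have hcard1 : H.verts.card = (G.verts \ {p, q, r}).card + 1 := by
        rw [hV, Finset.card_union_of_disjoint (by
          simp only [Finset.disjoint_singleton_right, Finset.mem_sdiff, not_and]
          intro h; exact absurd h htG), Finset.card_singleton]
      have hcard2 : (G.verts \ ({p, q, r} : Finset ℕ)).card = G.verts.card - 3 := by
        rw [Finset.card_sdiff_of_subset hsub, h3]
      have hle := Finset.card_le_card hsub
      rw [h3] at hle
      omega
    · -- connectivity after deleting two vertices
      intro x y
      obtain ⟨x', hx'⟩ : ∃ x', x' = if x = p ∨ x = q ∨ x = r then t else x := ⟨_, rfl⟩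
      obtain ⟨y', hy'⟩ : ∃ y', y' = if y = p ∨ y = q ∨ y = r then t else y := ⟨_, rfl⟩
      have hxne : ∀ w, w ∈ G.verts → w ≠ p → w ≠ q → w ≠ r → w ≠ x → w ≠ x' := by
        intro w hw e1 e2 e3 e4
        rw [hx']
        by_cases hx : x = p ∨ x = q ∨ x = r
        · rw [if_pos hx]; exact fun e => htG (e ▸ hw)
        · rw [if_neg hx]; exact e4
      have hyne : ∀ w, w ∈ G.verts → w ≠ p → w ≠ q → w ≠ r → w ≠ y → w ≠ y' := by
        intro w hw e1 e2 e3 e4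
        rw [hy']
        by_cases hy : y = p ∨ y = q ∨ y = r
        · rw [if_pos hy]; exact fun e => htG (e ▸ hw)
        · rw [if_neg hy]; exact e4
      have h1 : ∀ w, w ∈ (↑H.verts : Set ℕ) \ {x', y'} → w ≠ t →
          w ∈ (↑G.verts : Set ℕ) \ {x, y} := by
        intro w hw hwt
        obtain ⟨hwH, hwxy⟩ := hw
        simp only [Set.mem_insert_iff, Set.mem_singleton_iff, not_or] at hwxy
        rcases (hHmem w).1 hwH with ⟨hwv, e1, e2, e3⟩ | rfl
        · refine ⟨hwv, ?_⟩
          simp only [Set.mem_insert_iff, Set.mem_singleton_iff, not_or]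
          constructor
          · intro e
            subst e
            by_cases hx : w = p ∨ w = q ∨ w = r
            · tauto
            · exact hwxy.1 (by rw [hx', if_neg hx])
          · intro e
            subst e
            by_cases hy : w = p ∨ w = q ∨ w = r
            · tauto
            · exact hwxy.2 (by rw [hy', if_neg hy])
        · exact absurd rfl hwt
      have h2 : t ∈ (↑H.verts : Set ℕ) \ {x', y'} →
          p ∈ (↑G.verts : Set ℕ) \ {x, y} ∧ q ∈ (↑G.verts : Set ℕ) \ {x, y} ∧
            r ∈ (↑G.verts : Set ℕ) \ {x, y} := by
        intro ht
        obtain ⟨_, htxy⟩ := ht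
        simp only [Set.mem_insert_iff, Set.mem_singleton_iff, not_or] at htxy
        have hx : ¬(x = p ∨ x = q ∨ x = r) := fun hx => htxy.1 (by rw [hx', if_pos hx])
        have hy : ¬(y = p ∨ y = q ∨ y = r) := fun hy => htxy.2 (by rw [hy', if_pos hy])
        push_neg at hx hy
        refine ⟨⟨hpv, ?_⟩, ⟨hqv, ?_⟩, ⟨hrv, ?_⟩⟩ <;>
          simp only [Set.mem_insert_iff, Set.mem_singleton_iff, not_or] <;>
          exact ⟨fun e => by simp_all, fun e => by simp_all⟩
      apply connectedOn_of_sim (fun z => if z = t then p else z) (hH.1.2 x' y')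
        (d3a_step hcfg htG hA h1 h2)
      -- anchors
      intro u hu
      have hus : u ≠ x ∧ u ≠ y := by
        have := hu.2
        simp only [Set.mem_insert_iff, Set.mem_singleton_iff, not_or] at this
        exact this
      by_cases hu3 : u = p ∨ u = q ∨ u = r
      · have key : ∃ w, w ∈ ({p', q', r'} : Set ℕ) ∧ w ∈ (↑G.verts : Set ℕ) \ {x, y} ∧
            G.ReachableWithin ((↑G.verts : Set ℕ) \ {x, y}) u w := by
          rcases hu3 with rfl | rfl | rfl
          · exact d3a_anchor hcfg x y hu
          · obtain ⟨w, hw, hw2, hr⟩ := d3a_anchor (d3a_config_swap12 hcfg) x y hu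
            exact ⟨w, by revert hw; simp; tauto, hw2, hr⟩
          · obtain ⟨w, hw, hw2, hr⟩ := d3a_anchor (d3a_config_swap13 hcfg) x y hu
            exact ⟨w, by revert hw; simp; tauto, hw2, hr⟩
        obtain ⟨w, hw, hwS, hreach⟩ := key
        have hwG : w ∈ G.verts ∧ w ≠ p ∧ w ≠ q ∧ w ≠ r := by
          rcases hw with rfl | rfl | rfl
          · exact ⟨(G.support _ _ hp1).2, hpn⟩
          · exact ⟨(G.support _ _ hq1).2, hqn⟩
          · exact ⟨(G.support _ _ hr1).2, hrn⟩
        have hwt : w ≠ t := fun e => htG (e ▸ hwG.1)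
        have hwxy : w ≠ x ∧ w ≠ y := by
          have := hwS.2
          simp only [Set.mem_insert_iff, Set.mem_singleton_iff, not_or] at this
          exact this
        refine ⟨w, ⟨(hHmem w).2 (Or.inl ⟨hwG.1, hwG.2⟩), ?_⟩, ?_⟩
        · simp only [Set.mem_insert_iff, Set.mem_singleton_iff, not_or]
          exact ⟨hxne w hwG.1 hwG.2.1 hwG.2.2.1 hwG.2.2.2 hwxy.1,
            hyne w hwG.1 hwG.2.1 hwG.2.2.1 hwG.2.2.2 hwxy.2⟩
        · simpa [if_neg hwt] using hreach
      · push_neg at hu3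
        have huG : u ∈ G.verts := hu.1
        have hut : u ≠ t := fun e => htG (e ▸ huG)
        refine ⟨u, ⟨(hHmem u).2 (Or.inl ⟨huG, hu3⟩), ?_⟩, ?_⟩
        · simp only [Set.mem_insert_iff, Set.mem_singleton_iff, not_or]
          exact ⟨hxne u huG hu3.1 hu3.2.1 hu3.2.2 hus.1,
            hyne u huG hu3.1 hu3.2.1 hu3.2.2 hus.2⟩
        · rw [if_neg hut]; exact Relation.ReflTransGen.refl
  · -- triangles
    intro a b c hab hbc hac
    by_cases hm : a ∈ ({p, q, r} : Set ℕ) ∨ b ∈ ({p, q, r} : Set ℕ) ∨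
        c ∈ ({p, q, r} : Set ℕ)
    · have hset := d3a_tri hcfg hab hbc hac hm
      rw [show ((↑G.verts : Set ℕ) \ {a, b, c}) = ↑G.verts \ {p, q, r} from by rw [hset]]
      apply connectedOn_of_sim (fun z => if z = t then p else z) (hH.1.2 t t)
        (d3a_step hcfg htG hA ?_ ?_) ?_
      · intro w hw hwt
        rcases (hHmem w).1 hw.1 with ⟨hwv, e1, e2, e3⟩ | rfl
        · exact ⟨hwv, by simp [e1, e2, e3]⟩
        · exact absurd rfl hwt
      · intro ht
        exact absurd (show t ∈ ({t, t} : Set ℕ) from by simp) ht.2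
      · intro u hu
        have huG : u ∈ G.verts := hu.1
        have hu3 : u ≠ p ∧ u ≠ q ∧ u ≠ r := by
          have := hu.2
          simp only [Set.mem_insert_iff, Set.mem_singleton_iff, not_or] at this
          exact this
        have hut : u ≠ t := fun e => htG (e ▸ huG)
        refine ⟨u, ⟨(hHmem u).2 (Or.inl ⟨huG, hu3⟩), by simp [hut]⟩, ?_⟩
        rw [if_neg hut]; exact Relation.ReflTransGen.refl
    · push_neg at hm
      have hab' : H.Adj a b := (hA a b).2 (Or.inl ⟨hab, hm.1, hm.2.1⟩)
      have hbc' : H.Adj b c := (hA b c).2 (Or.inl ⟨hbc, hm.2.1, hm.2.2⟩)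
      have hac' : H.Adj a c := (hA a c).2 (Or.inl ⟨hac, hm.1, hm.2.2⟩)
      have hHconn := hH.2 a b c hab' hbc' hac'
      have hav : a ∈ G.verts := (G.support _ _ hab).1
      have hbv : b ∈ G.verts := (G.support _ _ hab).2
      have hcv : c ∈ G.verts := (G.support _ _ hac).2
      have hmne : a ≠ p ∧ a ≠ q ∧ a ≠ r := by
        have := hm.1
        simp only [Set.mem_insert_iff, Set.mem_singleton_iff, not_or] at this
        exact this
      have hmne2 : b ≠ p ∧ b ≠ q ∧ b ≠ r := by
        have := hm.2.1
        simp only [Set.mem_insert_iff, Set.mem_singleton_iff, not_or] at this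
        exact this
      have hmne3 : c ≠ p ∧ c ≠ q ∧ c ≠ r := by
        have := hm.2.2
        simp only [Set.mem_insert_iff, Set.mem_singleton_iff, not_or] at this
        exact this
      apply connectedOn_of_sim (fun z => if z = t then p else z) hHconn
        (d3a_step hcfg htG hA ?_ ?_) ?_
      · intro w hw hwt
        rcases (hHmem w).1 hw.1 with ⟨hwv, _, _, _⟩ | rfl
        · exact ⟨hwv, hw.2⟩
        · exact absurd rfl hwt
      · intro _
        have hmemG : ∀ w, w ∈ G.verts → w ≠ a → w ≠ b → w ≠ c →
            w ∈ (↑G.verts : Set ℕ) \ {a, b, c} := by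
          intro w hw e1 e2 e3
          exact ⟨hw, by simp [e1, e2, e3]⟩
        exact ⟨hmemG p hpv (Ne.symm hmne.1) (Ne.symm hmne2.1) (Ne.symm hmne3.1),
          hmemG q hqv (Ne.symm hmne.2.1) (Ne.symm hmne2.2.1) (Ne.symm hmne3.2.1),
          hmemG r hrv (Ne.symm hmne.2.2) (Ne.symm hmne2.2.2) (Ne.symm hmne3.2.2)⟩
      · intro u hu
        have hu3 : u ≠ a ∧ u ≠ b ∧ u ≠ c := by
          have := hu.2
          simp only [Set.mem_insert_iff, Set.mem_singleton_iff, not_or] at this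
          exact this
        have htabc : t ∉ ({a, b, c} : Set ℕ) := by
          simp only [Set.mem_insert_iff, Set.mem_singleton_iff, not_or]
          exact ⟨fun e => htG (e ▸ hav), fun e => htG (e ▸ hbv), fun e => htG (e ▸ hcv)⟩
        by_cases hup : u = p ∨ u = q ∨ u = r
        · refine ⟨t, ⟨htH, htabc⟩, ?_⟩
          have hfix : (fun z : ℕ => if z = t then p else z) t = p := by simp
          rw [if_pos rfl]
          have hpS : p ∈ (↑G.verts : Set ℕ) \ {a, b, c} :=
            ⟨hpv, by simp [Ne.symm hmne.1, Ne.symm hmne2.1, Ne.symm hmne3.1]⟩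
          rcases hup with rfl | rfl | rfl
          · exact Relation.ReflTransGen.refl
          · exact rw_single (G.symm _ _ hpq) hu hpS
          · exact rw_single (G.symm _ _ hpr) hu hpS
        · push_neg at hup
          have huG : u ∈ G.verts := hu.1
          have hut : u ≠ t := fun e => htG (e ▸ huG)
          refine ⟨u, ⟨(hHmem u).2 (Or.inl ⟨huG, hup⟩), hu.2⟩, ?_⟩
          rw [if_neg hut]; exact Relation.ReflTransGen.refl

end D3aSec

section D3bSec

variable {G H : FinGraph} {p q r s : ℕ}

lemma d3b_nbq (hcfg : G.D3bConfig p q r s) : G.neighborSet q = {p, r, s} := by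
  obtain ⟨dp, dq, dr, hpq, hqr, hnpr, hprne, hsp, hsq, hsr⟩ := hcfg
  exact neighbors_eq3 dq (G.symm _ _ hpq) hqr (G.symm _ _ hsq) hprne
    (Ne.symm (adj_ne hsp)) (Ne.symm (adj_ne hsr))

lemma d3b_third (hcfg : G.D3bConfig p q r s) :
    ∃ w, G.Adj p w ∧ w ≠ q ∧ w ≠ s ∧ w ≠ p ∧ w ≠ r := by
  obtain ⟨dp, dq, dr, hpq, hqr, hnpr, hprne, hsp, hsq, hsr⟩ := hcfg
  have hqs : q ≠ s := Ne.symm (adj_ne hsq)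
  have hne : ¬ (G.neighborSet p ⊆ {q, s}) := by
    intro hsub
    have h2 : (G.neighborSet p).ncard ≤ ({q, s} : Set ℕ).ncard :=
      Set.ncard_le_ncard hsub ((Set.finite_singleton s).insert q)
    rw [Set.ncard_pair hqs] at h2
    have h3 : (G.neighborSet p).ncard = 3 := dp
    omega
  obtain ⟨w, hw, hwns⟩ := Set.not_subset.1 hne
  simp only [Set.mem_insert_iff, Set.mem_singleton_iff, not_or] at hwns
  exact ⟨w, hw, hwns.1, hwns.2, fun e => G.loopless p (e ▸ hw),
    fun e => hnpr (e ▸ hw)⟩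

lemma d3b_tri_first (hcfg : G.D3bConfig p q r s) {b c : ℕ}
    (hqb : G.Adj q b) (hqc : G.Adj q c) (hbc : G.Adj b c) :
    ({q, b, c} : Set ℕ) = {p, q, s} ∨ ({q, b, c} : Set ℕ) = {r, q, s} := by
  have hN := d3b_nbq hcfg
  obtain ⟨dp, dq, dr, hpq, hqr, hnpr, hprne, hsp, hsq, hsr⟩ := hcfg
  have hb : b ∈ ({p, r, s} : Set ℕ) := by
    have : b ∈ G.neighborSet q := hqb
    rwa [hN] at this
  have hc : c ∈ ({p, r, s} : Set ℕ) := by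
    have : c ∈ G.neighborSet q := hqc
    rwa [hN] at this
  have hbc' : b ≠ c := adj_ne hbc
  rcases hb with rfl | rfl | rfl <;> rcases hc with rfl | rfl | rfl
  · exact absurd rfl hbc'
  · exact absurd hbc hnpr
  · left; ext z; simp; tauto
  · exact absurd (G.symm _ _ hbc) hnpr
  · exact absurd rfl hbc'
  · right; ext z; simp; tauto
  · left; ext z; simp; tauto
  · right; ext z; simp; tauto
  · exact absurd rfl hbc'

lemma d3b_tri (hcfg : G.D3bConfig p q r s) {a b c : ℕ}
    (hab : G.Adj a b) (hbc : G.Adj b c) (hac : G.Adj a c)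
    (hm : a = q ∨ b = q ∨ c = q) :
    ({a, b, c} : Set ℕ) = {p, q, s} ∨ ({a, b, c} : Set ℕ) = {r, q, s} := by
  rcases hm with h | h | h
  · rw [h] at hab hac ⊢
    exact d3b_tri_first hcfg hab hac hbc
  · rw [h] at hab hbc
    have h0 : ({a, b, c} : Set ℕ) = {q, a, c} := by rw [h]; ext z; simp; tauto
    rw [h0]
    exact d3b_tri_first hcfg (G.symm _ _ hab) hbc hac
  · rw [h] at hac hbc
    have h0 : ({a, b, c} : Set ℕ) = {q, a, b} := by rw [h]; ext z; simp; tauto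
    rw [h0]
    exact d3b_tri_first hcfg (G.symm _ _ hac) (G.symm _ _ hbc) hab

lemma d3b_step (hcfg : G.D3bConfig p q r s)
    (hA : ∀ a b, H.Adj a b ↔
      (G.Adj a b ∧ a ≠ q ∧ b ≠ q) ∨ (a = p ∧ b = r) ∨ (a = r ∧ b = p))
    {S S' : Set ℕ}
    (h1 : ∀ w, w ∈ S' → w ∈ S) (h2 : p ∈ S' → r ∈ S' → q ∈ S) :
    ∀ a b, H.Adj a b → a ∈ S' → b ∈ S' → G.ReachableWithin S (id a) (id b) := by
  obtain ⟨dp, dq, dr, hpq, hqr, hnpr, hprne, hsp, hsq, hsr⟩ := hcfg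
  intro a b hab haS hbS
  rcases (hA a b).1 hab with ⟨hg, _, _⟩ | ⟨ea, eb⟩ | ⟨ea, eb⟩
  · exact rw_single hg (h1 a haS) (h1 b hbS)
  · subst ea; subst eb
    have hqS := h2 haS hbS
    exact rw_trans (rw_single hpq (h1 _ haS) hqS) (rw_single hqr hqS (h1 _ hbS))
  · subst ea; subst eb
    have hqS := h2 hbS haS
    exact rw_trans (rw_single (G.symm _ _ hqr) (h1 _ haS) hqS)
      (rw_single (G.symm _ _ hpq) hqS (h1 _ hbS))

set_option maxHeartbeats 2000000 in
lemma inv_d3b (hcfg : G.D3bConfig p q r s) (hV : H.verts = G.verts \ {q})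
    (hA : ∀ a b, H.Adj a b ↔
      (G.Adj a b ∧ a ≠ q ∧ b ≠ q) ∨ (a = p ∧ b = r) ∨ (a = r ∧ b = p))
    (hH : H.Inv) : G.Inv := by
  have hcfg' := hcfg
  obtain ⟨dp, dq, dr, hpq, hqr, hnpr, hprne, hsp, hsq, hsr⟩ := hcfg'
  have hpv : p ∈ G.verts := (G.support _ _ hpq).1
  have hqv : q ∈ G.verts := (G.support _ _ hpq).2
  have hrv : r ∈ G.verts := (G.support _ _ hqr).2
  have hsv : s ∈ G.verts := (G.support _ _ hsp).1
  have hqp : q ≠ p := Ne.symm (adj_ne hpq)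
  have hqr' : q ≠ r := adj_ne hqr
  have hqs : q ≠ s := Ne.symm (adj_ne hsq)
  have hsp' : s ≠ p := adj_ne hsp
  have hsr' : s ≠ r := adj_ne hsr
  obtain ⟨w3, hw3, hw3q, hw3s, hw3p, hw3r⟩ := d3b_third hcfg
  have hw3v : w3 ∈ G.verts := (G.support _ _ hw3).2
  have hHmem : ∀ w, w ∈ H.verts ↔ w ∈ G.verts ∧ w ≠ q := by
    intro w; rw [hV]; simp
  constructor
  · constructor
    · -- cardinality
      have hcardH : 3 < H.verts.card := hH.1.1
      have hsub : ({q} : Finset ℕ) ⊆ G.verts := by simp [hqv]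
      have hc : H.verts.card = G.verts.card - 1 := by
        rw [hV, Finset.card_sdiff_of_subset hsub, Finset.card_singleton]
      omega
    · -- connectivity after deleting two vertices
      intro x y
      by_cases hqxy : q = x ∨ q = y
      · have claim : ∀ z, G.ConnectedOn ((↑G.verts : Set ℕ) \ {q, z}) := by
          intro z
          apply connectedOn_of_sim id (hH.1.2 p z) (d3b_step hcfg hA ?_ ?_) ?_
          · intro w hw
            have hwH := (hHmem w).1 hw.1
            have hw2 : w ≠ p ∧ w ≠ z := by
              have := hw.2
              simp only [Set.mem_insert_iff, Set.mem_singleton_iff, not_or] at this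
              exact this
            exact ⟨hwH.1, by simp [hwH.2, hw2.2]⟩
          · intro hp' _
            exact absurd (show p ∈ ({p, z} : Set ℕ) from by simp) hp'.2
          · intro u hu
            have huq : u ≠ q ∧ u ≠ z := by
              have := hu.2
              simp only [Set.mem_insert_iff, Set.mem_singleton_iff, not_or] at this
              exact this
            by_cases hup : u = p
            · subst hup
              by_cases hsz : s = z
              · have hw3z : w3 ≠ z := fun e => hw3s (e.trans hsz.symm)
                refine ⟨w3, ⟨(hHmem w3).2 ⟨hw3v, hw3q⟩, by simp [hw3p, hw3z]⟩,
                  rw_single hw3 hu ⟨hw3v, by simp [hw3q, hw3z]⟩⟩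
              · refine ⟨s, ⟨(hHmem s).2 ⟨hsv, Ne.symm hqs⟩, by simp [hsp', hsz]⟩,
                  rw_single (G.symm _ _ hsp) hu ⟨hsv, by simp [Ne.symm hqs, hsz]⟩⟩
            · exact ⟨u, ⟨(hHmem u).2 ⟨hu.1, huq.1⟩, by simp [hup, huq.2]⟩,
                Relation.ReflTransGen.refl⟩
        rcases hqxy with rfl | rfl
        · exact claim y
        · rw [Set.pair_comm x q]
          exact claim x
      · push_neg at hqxy
        apply connectedOn_of_sim id (hH.1.2 x y) (d3b_step hcfg hA ?_ ?_) ?_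
        · intro w hw
          exact ⟨((hHmem w).1 hw.1).1, hw.2⟩
        · intro _ _
          exact ⟨hqv, by simp [hqxy.1, hqxy.2]⟩
        · intro u hu
          by_cases huq : u = q
          · subst huq
            by_cases hp2 : p = x ∨ p = y
            · by_cases hr2 : r = x ∨ r = y
              · have hs2 : s ≠ x ∧ s ≠ y := by
                  rcases hp2 with e | e <;> rcases hr2 with f | f <;>
                    first
                      | (exact absurd (e.symm.trans f) hprne)
                      | (exact ⟨fun g => by omega, fun g => by omega⟩)
                refine ⟨s, ⟨(hHmem s).2 ⟨hsv, Ne.symm hqs⟩, by simp [hs2.1, hs2.2]⟩,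
                  rw_single (G.symm _ _ hsq) hu ⟨hsv, by simp [hs2.1, hs2.2]⟩⟩
              · push_neg at hr2
                refine ⟨r, ⟨(hHmem r).2 ⟨hrv, Ne.symm hqr'⟩, by simp [hr2.1, hr2.2]⟩,
                  rw_single hqr hu ⟨hrv, by simp [hr2.1, hr2.2]⟩⟩
            · push_neg at hp2
              refine ⟨p, ⟨(hHmem p).2 ⟨hpv, Ne.symm hqp⟩, by simp [hp2.1, hp2.2]⟩,
                rw_single (G.symm _ _ hpq) hu ⟨hpv, by simp [hp2.1, hp2.2]⟩⟩
          · exact ⟨u, ⟨(hHmem u).2 ⟨hu.1, huq⟩, hu.2⟩, Relation.ReflTransGen.refl⟩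
  · -- triangles
    intro a b c hab hbc hac
    by_cases hqm : a = q ∨ b = q ∨ c = q
    · rcases d3b_tri hcfg hab hbc hac hqm with he | he
      · rw [show ((↑G.verts : Set ℕ) \ {a, b, c}) = ↑G.verts \ {p, q, s} from by rw [he]]
        apply connectedOn_of_sim id (hH.1.2 p s) (d3b_step hcfg hA ?_ ?_) ?_
        · intro w hw
          have hwH := (hHmem w).1 hw.1
          have hw2 : w ≠ p ∧ w ≠ s := by
            have := hw.2
            simp only [Set.mem_insert_iff, Set.mem_singleton_iff, not_or] at this
            exact this
          exact ⟨hwH.1, by simp [hw2.1, hwH.2, hw2.2]⟩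
        · intro hp' _
          exact absurd (show p ∈ ({p, s} : Set ℕ) from by simp) hp'.2
        · intro u hu
          have hu3 : u ≠ p ∧ u ≠ q ∧ u ≠ s := by
            have := hu.2
            simp only [Set.mem_insert_iff, Set.mem_singleton_iff, not_or] at this
            exact this
          exact ⟨u, ⟨(hHmem u).2 ⟨hu.1, hu3.2.1⟩, by simp [hu3.1, hu3.2.2]⟩,
            Relation.ReflTransGen.refl⟩
      · rw [show ((↑G.verts : Set ℕ) \ {a, b, c}) = ↑G.verts \ {r, q, s} from by rw [he]]
        apply connectedOn_of_sim id (hH.1.2 r s) (d3b_step hcfg hA ?_ ?_) ?_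
        · intro w hw
          have hwH := (hHmem w).1 hw.1
          have hw2 : w ≠ r ∧ w ≠ s := by
            have := hw.2
            simp only [Set.mem_insert_iff, Set.mem_singleton_iff, not_or] at this
            exact this
          exact ⟨hwH.1, by simp [hw2.1, hwH.2, hw2.2]⟩
        · intro _ hr'
          exact absurd (show r ∈ ({r, s} : Set ℕ) from by simp) hr'.2
        · intro u hu
          have hu3 : u ≠ r ∧ u ≠ q ∧ u ≠ s := by
            have := hu.2
            simp only [Set.mem_insert_iff, Set.mem_singleton_iff, not_or] at this
            exact this
          exact ⟨u, ⟨(hHmem u).2 ⟨hu.1, hu3.2.1⟩, by simp [hu3.1, hu3.2.2]⟩,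
            Relation.ReflTransGen.refl⟩
    · push_neg at hqm
      have hab' : H.Adj a b := (hA a b).2 (Or.inl ⟨hab, hqm.1, hqm.2.1⟩)
      have hbc' : H.Adj b c := (hA b c).2 (Or.inl ⟨hbc, hqm.2.1, hqm.2.2⟩)
      have hac' : H.Adj a c := (hA a c).2 (Or.inl ⟨hac, hqm.1, hqm.2.2⟩)
      apply connectedOn_of_sim id (hH.2 a b c hab' hbc' hac') (d3b_step hcfg hA ?_ ?_) ?_
      · intro w hw
        exact ⟨((hHmem w).1 hw.1).1, hw.2⟩
      · intro _ _
        exact ⟨hqv, by simp [Ne.symm hqm.1, Ne.symm hqm.2.1, Ne.symm hqm.2.2]⟩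
      · intro u hu
        by_cases huq : u = q
        · subst huq
          have hnot : ¬(p ∈ ({a, b, c} : Set ℕ) ∧ r ∈ ({a, b, c} : Set ℕ)) := by
            rintro ⟨h1, h2⟩
            exact hnpr (tri_adj hab hbc hac h1 h2 hprne)
          by_cases hpm : p ∈ ({a, b, c} : Set ℕ)
          · have hrm : r ∉ ({a, b, c} : Set ℕ) := fun h => hnot ⟨hpm, h⟩
            exact ⟨r, ⟨(hHmem r).2 ⟨hrv, Ne.symm hqr'⟩, hrm⟩,
              rw_single hqr hu ⟨hrv, hrm⟩⟩
          · exact ⟨p, ⟨(hHmem p).2 ⟨hpv, Ne.symm hqp⟩, hpm⟩,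
              rw_single (G.symm _ _ hpq) hu ⟨hpv, hpm⟩⟩
        · exact ⟨u, ⟨(hHmem u).2 ⟨hu.1, huq⟩, hu.2⟩, Relation.ReflTransGen.refl⟩

end D3bSec

lemma inv_step {G H : FinGraph} (h : G.D3Step H) (hH : H.Inv) : G.Inv := by
  rcases h with ha | hb
  · obtain ⟨p, q, r, p', q', r', t, hcfg, htG, hV, hA⟩ := ha
    exact inv_d3a hcfg htG hV hA hH
  · obtain ⟨p, q, r, s, hcfg, hV, hA⟩ := hb
    exact inv_d3b hcfg hV hA hH

lemma inv_of_red {G H : FinGraph} (h : Relation.ReflTransGen D3Step G H) (hH : H.Inv) :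
    G.Inv := by
  induction h using Relation.ReflTransGen.head_induction_on with
  | refl => exact hH
  | head hstep _ ih => exact inv_step hstep ih

end FinGraph

/-- In the unique planar embedding of a D3-reducible graph, every triangle is a face.
(Faces of a 3-connected planar graph are, by Tutte's characterization, exactly the
induced cycles with connected complement, as expressed by `IsFaceCycle`.) -/
theorem d3_reducible_triangle_is_face (G : FinGraph) (h : G.D3Reducible)
    (p q r : ℕ) (hpq : G.Adj p q) (hqr : G.Adj q r) (hpr : G.Adj p r) :
    FinGraph.IsFaceCycle G {p, q, r} := by
  obtain ⟨H, hred, hK4⟩ := h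
  have hInv : G.Inv := FinGraph.inv_of_red hred (FinGraph.inv_K4 hK4)
  have hpq' : p ≠ q := FinGraph.adj_ne hpq
  have hpr' : p ≠ r := FinGraph.adj_ne hpr
  have hqr' : q ≠ r := FinGraph.adj_ne hqr
  have hpv : p ∈ G.verts := (G.support _ _ hpq).1
  have hqv : q ∈ G.verts := (G.support _ _ hpq).2
  have hrv : r ∈ G.verts := (G.support _ _ hpr).2
  have hCset : (↑({p, q, r} : Finset ℕ) : Set ℕ) = ({p, q, r} : Set ℕ) := by simp
  refine ⟨?_, ?_, ?_, ?_, ?_⟩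
  · rw [hCset]
    intro u hu
    rcases hu with rfl | rfl | rfl <;> simpa
  · rw [Finset.card_insert_of_notMem (by simp [hpq', hpr']),
      Finset.card_insert_of_notMem (by simp [hqr']), Finset.card_singleton]
  · intro v hv
    simp only [Finset.mem_insert, Finset.mem_singleton] at hv
    rcases hv with h | h | h <;> rw [h]
    · have hset : {u | u ∈ ({p, q, r} : Finset ℕ) ∧ G.Adj p u} = {q, r} := by
        ext u
        simp only [Finset.mem_insert, Finset.mem_singleton, Set.mem_setOf_eq,
          Set.mem_insert_iff, Set.mem_singleton_iff]
        constructor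
        · rintro ⟨he | he | he, hadj⟩
          · rw [he] at hadj; exact absurd hadj (G.loopless p)
          · exact Or.inl he
          · exact Or.inr he
        · rintro (rfl | rfl)
          · exact ⟨Or.inr (Or.inl rfl), hpq⟩
          · exact ⟨Or.inr (Or.inr rfl), hpr⟩
      rw [hset, Set.ncard_pair hqr']
    · have hset : {u | u ∈ ({p, q, r} : Finset ℕ) ∧ G.Adj q u} = {p, r} := by
        ext u
        simp only [Finset.mem_insert, Finset.mem_singleton, Set.mem_setOf_eq,
          Set.mem_insert_iff, Set.mem_singleton_iff]
        constructor
        · rintro ⟨he | he | he, hadj⟩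
          · exact Or.inl he
          · rw [he] at hadj; exact absurd hadj (G.loopless q)
          · exact Or.inr he
        · rintro (rfl | rfl)
          · exact ⟨Or.inl rfl, G.symm _ _ hpq⟩
          · exact ⟨Or.inr (Or.inr rfl), hqr⟩
      rw [hset, Set.ncard_pair hpr']
    · have hset : {u | u ∈ ({p, q, r} : Finset ℕ) ∧ G.Adj r u} = {p, q} := by
        ext u
        simp only [Finset.mem_insert, Finset.mem_singleton, Set.mem_setOf_eq,
          Set.mem_insert_iff, Set.mem_singleton_iff]
        constructor
        · rintro ⟨he | he | he, hadj⟩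
          · exact Or.inl he
          · exact Or.inr he
          · rw [he] at hadj; exact absurd hadj (G.loopless r)
        · rintro (rfl | rfl)
          · exact ⟨Or.inl rfl, G.symm _ _ hpr⟩
          · exact ⟨Or.inr (Or.inl rfl), G.symm _ _ hqr⟩
      rw [hset, Set.ncard_pair hpq']
  · rw [hCset]
    intro u hu v hv
    by_cases huv : u = v
    · exact huv ▸ Relation.ReflTransGen.refl
    · exact FinGraph.rw_single (FinGraph.tri_adj hpq hqr hpr hu hv huv) hu hv
  · rw [hCset]
    exact hInv.2 p q r hpq hqr hpr
end
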